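/- arXiv:1203.3857 — 4 statements merged into one kernel-verified Lean document; each statement's English description precedes it below -/
import Mathlib

section
/- Deterministic specialization of Lemma 4.4: passing from the inverse equation to the Riccati equation. Let T > 0, let A, B, C, Q : [0,T] → M_n(ℝ) be continuous with Q(t) symmetric, let R : [0,T] → M_n(ℝ) be continuously differentiable with R(t) symmetric, and let H be symmetric with R(T) + H positive definite. Assume R(t)B(t) + C(t)'R(t) = 0 for all t. Set Ã := A − BC and Q̃ := Q + C'RC + R(BC − A) + (C'B' − A')R − R'. Suppose X : [0,T] → M_n(ℝ) is continuously differentiable, X(t) is positive definite for every t, X(T) = (R(T)+H)⁻¹, and X'(t) = Ã(t)X(t) + X(t)Ã(t)' − B(t)X(t)B(t)' + X(t)Q̃(t)X(t) for all t ∈ [0,T]. Then P := X⁻¹ − R satisfies P(T) = H, R(t) + P(t) is positive definite for all t, and P'(t) = −[PA + A'P + C'PC + Q](t) + [PB + C'P](t)(R(t)+P(t))⁻¹[B'P + PC](t) for all t ∈ [0,T]. -/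
open Matrix Set

set_option maxHeartbeats 1000000

lemma riccati_ring_identity {α : Type*} [Ring α]
    (a a' b b' c c' q r r' x y : α)
    (hxy : x * y = 1) (hyx : y * x = 1)
    (h1 : r * b = -(c' * r)) (h2 : b' * r = -(r * c)) :
    -(y * ((a - b * c) * x + x * (a' - c' * b') - b * x * b'
        + x * (q + c' * r * c + r * (b * c - a) + (c' * b' - a') * r - r') * x) * y) - r'
      = -((y - r) * a + a' * (y - r) + c' * (y - r) * c + q)
        + ((y - r) * b + c' * (y - r)) * x * (b' * (y - r) + (y - r) * c) := by
  have hx : ∀ z : α, x * (y * z) = z := fun z => by rw [← mul_assoc, hxy, one_mul]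
  have hy : ∀ z : α, y * (x * z) = z := fun z => by rw [← mul_assoc, hyx, one_mul]
  have h1' : ∀ z : α, r * (b * z) = -(c' * (r * z)) := fun z => by
    rw [← mul_assoc, h1, neg_mul, mul_assoc]
  have h2' : ∀ z : α, b' * (r * z) = -(r * (c * z)) := fun z => by
    rw [← mul_assoc, h2, neg_mul, mul_assoc]
  simp only [mul_add, add_mul, mul_sub, sub_mul, mul_assoc, mul_one, one_mul,
    hxy, hyx, hx, hy, h1, h2, h1', h2', mul_neg, neg_mul, neg_neg, neg_sub,
    sub_eq_add_neg, neg_add]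
  abel

section L
attribute [local instance] Matrix.linftyOpNormedRing Matrix.linftyOpNormedAlgebra

variable {n : ℕ}

lemma entry_hdwa_linfty {f : ℝ → Matrix (Fin n) (Fin n) ℝ} {f' : Matrix (Fin n) (Fin n) ℝ}
    {s : Set ℝ} {x : ℝ} :
    HasDerivWithinAt f f' s x ↔
      ∀ i j, HasDerivWithinAt (fun t => f t i j) (f' i j) s x := by
  constructor
  · intro h i j
    have := ((Matrix.entryLinearMap ℝ ℝ i j).toContinuousLinearMap.hasFDerivAt
      (x := f x)).comp_hasDerivWithinAt x h
    exact this
  · intro h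
    have key : ∀ (i j : Fin n) (c : ℝ),
        single i j c = c • single i j (1:ℝ) := by
      intro i j c; rw [smul_single, smul_eq_mul, mul_one]
    have hsum : HasDerivWithinAt
        (fun t => ∑ i : Fin n, ∑ j : Fin n, single i j (f t i j))
        (∑ i : Fin n, ∑ j : Fin n, single i j (f' i j)) s x := by
      refine HasDerivWithinAt.fun_sum fun i _ => HasDerivWithinAt.fun_sum fun j _ => ?_
      rw [key i j (f' i j)]
      simp_rw [key i j (f _ i j)]
      exact (h i j).smul_const _
    have e1 : (fun t => ∑ i : Fin n, ∑ j : Fin n, single i j (f t i j)) = f := by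
      funext t; exact (matrix_eq_sum_single (f t)).symm
    have e2 : (∑ i : Fin n, ∑ j : Fin n, single i j (f' i j)) = f' :=
      (matrix_eq_sum_single f').symm
    rwa [e1, e2] at hsum

lemma linfty_main (T : ℝ) (A B C Q R R' X : ℝ → Matrix (Fin n) (Fin n) ℝ)
    (hRsymm : ∀ t ∈ Icc 0 T, (R t)ᵀ = R t)
    (hi : ∀ t ∈ Icc 0 T, R t * B t + (C t)ᵀ * R t = 0)
    (hXpos : ∀ t ∈ Icc 0 T, (X t).PosDef)
    (x : ℝ) (hx : x ∈ Icc 0 T)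
    (hRd : ∀ i j, HasDerivWithinAt (fun t => R t i j) (R' x i j) (Icc 0 T) x)
    (hXd : ∀ i j, HasDerivWithinAt (fun t => X t i j)
      (((A x - B x * C x) * X x + X x * (A x - B x * C x)ᵀ
          - B x * X x * (B x)ᵀ
          + X x * (Q x + (C x)ᵀ * R x * C x + R x * (B x * C x - A x)
              + ((C x)ᵀ * (B x)ᵀ - (A x)ᵀ) * R x - R' x) * X x) i j) (Icc 0 T) x) :
    ∀ i j, HasDerivWithinAt (fun t => ((X t)⁻¹ - R t) i j)
      ((-(((X x)⁻¹ - R x) * A x + (A x)ᵀ * ((X x)⁻¹ - R x)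
            + (C x)ᵀ * ((X x)⁻¹ - R x) * C x + Q x)
          + (((X x)⁻¹ - R x) * B x + (C x)ᵀ * ((X x)⁻¹ - R x))
            * (R x + ((X x)⁻¹ - R x))⁻¹
            * ((B x)ᵀ * ((X x)⁻¹ - R x) + ((X x)⁻¹ - R x) * C x)) i j) (Icc 0 T) x := by
  set D := ((A x - B x * C x) * X x + X x * (A x - B x * C x)ᵀ
          - B x * X x * (B x)ᵀ
          + X x * (Q x + (C x)ᵀ * R x * C x + R x * (B x * C x - A x)
              + ((C x)ᵀ * (B x)ᵀ - (A x)ᵀ) * R x - R' x) * X x) with hD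
  have hXderiv : HasDerivWithinAt X D (Icc 0 T) x := entry_hdwa_linfty.2 hXd
  have hRderiv : HasDerivWithinAt R (R' x) (Icc 0 T) x := entry_hdwa_linfty.2 hRd
  have hdet : IsUnit (X x).det := (hXpos x hx).det_pos.ne'.isUnit
  have hu : IsUnit (X x) := (Matrix.isUnit_iff_isUnit_det _).2 hdet
  have hinv0 := (hasFDerivAt_ringInverse hu.unit).comp_hasDerivWithinAt x hXderiv
  have huinv : (↑hu.unit⁻¹ : Matrix (Fin n) (Fin n) ℝ) = (X x)⁻¹ := by
    rw [Matrix.nonsing_inv_eq_ringInverse, ← Ring.inverse_unit hu.unit, IsUnit.unit_spec]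
  have hinv : HasDerivWithinAt (fun t => (X t)⁻¹)
      (-((X x)⁻¹ * D * (X x)⁻¹)) (Icc 0 T) x := by
    have e1 : (fun t => Ring.inverse (X t)) = fun t => (X t)⁻¹ := by
      funext t; rw [Matrix.nonsing_inv_eq_ringInverse]
    rw [← e1]
    convert hinv0 using 1
    iterate 4 rfl
    simp [huinv, mul_assoc]
  have hP : HasDerivWithinAt (fun t => (X t)⁻¹ - R t)
      (-((X x)⁻¹ * D * (X x)⁻¹) - R' x) (Icc 0 T) x := hinv.sub hRderiv
  have hxy : X x * (X x)⁻¹ = 1 := mul_nonsing_inv _ hdet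
  have hyx : (X x)⁻¹ * X x = 1 := nonsing_inv_mul _ hdet
  have h1 : R x * B x = -((C x)ᵀ * R x) := eq_neg_of_add_eq_zero_left (hi x hx)
  have h2 : (B x)ᵀ * R x = -(R x * C x) := by
    have := congrArg Matrix.transpose (hi x hx)
    rw [transpose_add, transpose_mul, transpose_mul, transpose_transpose,
      hRsymm x hx, transpose_zero] at this
    exact eq_neg_of_add_eq_zero_left this
  have hRP : (R x + ((X x)⁻¹ - R x))⁻¹ = X x := by
    rw [add_sub_cancel, nonsing_inv_nonsing_inv _ hdet]
  have hkey := riccati_ring_identity (A x) ((A x)ᵀ) (B x) ((B x)ᵀ) (C x) ((C x)ᵀ)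
      (Q x) (R x) (R' x) (X x) ((X x)⁻¹) hxy hyx h1 h2
  refine entry_hdwa_linfty.1 ?_
  convert hP using 1
  rw [hRP, ← hkey, hD]
  rw [transpose_sub, transpose_mul]

attribute [local instance] Matrix.normedAddCommGroup Matrix.normedSpace

lemma entry_hdwa_pi {n : ℕ} {f : ℝ → Matrix (Fin n) (Fin n) ℝ} {f' : Matrix (Fin n) (Fin n) ℝ}
    {s : Set ℝ} {x : ℝ} :
    HasDerivWithinAt f f' s x ↔
      ∀ i j, HasDerivWithinAt (fun t => f t i j) (f' i j) s x := by
  constructor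
  · intro h i j
    have := ((Matrix.entryLinearMap ℝ ℝ i j).toContinuousLinearMap.hasFDerivAt
      (x := f x)).comp_hasDerivWithinAt x h
    exact this
  · intro h
    have key : ∀ (i j : Fin n) (c : ℝ),
        single i j c = c • single i j (1:ℝ) := by
      intro i j c; rw [smul_single, smul_eq_mul, mul_one]
    have hsum : HasDerivWithinAt
        (fun t => ∑ i : Fin n, ∑ j : Fin n, single i j (f t i j))
        (∑ i : Fin n, ∑ j : Fin n, single i j (f' i j)) s x := by
      refine HasDerivWithinAt.fun_sum fun i _ => HasDerivWithinAt.fun_sum fun j _ => ?_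
      rw [key i j (f' i j)]
      simp_rw [key i j (f _ i j)]
      exact (((LinearMap.toSpanSingleton ℝ _ (single i j (1:ℝ))).toContinuousLinearMap).hasFDerivAt.comp_hasDerivWithinAt x (h i j))
    have e1 : (fun t => ∑ i : Fin n, ∑ j : Fin n, single i j (f t i j)) = f := by
      funext t; exact (matrix_eq_sum_single (f t)).symm
    have e2 : (∑ i : Fin n, ∑ j : Fin n, single i j (f' i j)) = f' :=
      (matrix_eq_sum_single f').symm
    rwa [e1, e2] at hsum


/-- Deterministic specialization of Lemma 4.4: passing from the inverse
equation to the Riccati equation. -/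
theorem inverse_equation_yields_riccati_solution
    (T : ℝ) (hT : 0 < T) (n : ℕ)
    (A B C Q R R' X : ℝ → Matrix (Fin n) (Fin n) ℝ)
    (H : Matrix (Fin n) (Fin n) ℝ)
    (hA : ContinuousOn A (Icc 0 T)) (hB : ContinuousOn B (Icc 0 T))
    (hC : ContinuousOn C (Icc 0 T)) (hQ : ContinuousOn Q (Icc 0 T))
    (hR' : ContinuousOn R' (Icc 0 T))
    (hQsymm : ∀ t ∈ Icc 0 T, (Q t)ᵀ = Q t)
    (hRsymm : ∀ t ∈ Icc 0 T, (R t)ᵀ = R t)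
    (hRderiv : ∀ t ∈ Icc 0 T, HasDerivWithinAt R (R' t) (Icc 0 T) t)
    (hHsymm : Hᵀ = H)
    (hRTH : (R T + H).PosDef)
    (hi : ∀ t ∈ Icc 0 T, R t * B t + (C t)ᵀ * R t = 0)
    (hXpos : ∀ t ∈ Icc 0 T, (X t).PosDef)
    (hXT : X T = (R T + H)⁻¹)
    (hXderiv : ∀ t ∈ Icc 0 T,
      HasDerivWithinAt X
        ((A t - B t * C t) * X t + X t * (A t - B t * C t)ᵀ
          - B t * X t * (B t)ᵀ
          + X t * (Q t + (C t)ᵀ * R t * C t + R t * (B t * C t - A t)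
              + ((C t)ᵀ * (B t)ᵀ - (A t)ᵀ) * R t - R' t) * X t)
        (Icc 0 T) t) :
    (fun t => (X t)⁻¹ - R t) T = H ∧
    (∀ t ∈ Icc 0 T, (R t + ((X t)⁻¹ - R t)).PosDef) ∧
    (∀ t ∈ Icc 0 T,
      HasDerivWithinAt (fun t => (X t)⁻¹ - R t)
        (-(((X t)⁻¹ - R t) * A t + (A t)ᵀ * ((X t)⁻¹ - R t)
            + (C t)ᵀ * ((X t)⁻¹ - R t) * C t + Q t)
          + (((X t)⁻¹ - R t) * B t + (C t)ᵀ * ((X t)⁻¹ - R t))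
            * (R t + ((X t)⁻¹ - R t))⁻¹
            * ((B t)ᵀ * ((X t)⁻¹ - R t) + ((X t)⁻¹ - R t) * C t))
        (Icc 0 T) t) := by
  refine ⟨?_, ?_, ?_⟩
  · have hdet : IsUnit (R T + H).det := hRTH.det_pos.ne'.isUnit
    simp only [hXT, nonsing_inv_nonsing_inv _ hdet, add_sub_cancel_left]
  · intro t ht
    rw [add_sub_cancel]
    exact (hXpos t ht).inv
  · intro t ht
    exact entry_hdwa_pi.2 (linfty_main T A B C Q R R' X hRsymm hi hXpos t ht
      (fun i j => entry_hdwa_pi.1 (hRderiv t ht) i j)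
      (fun i j => entry_hdwa_pi.1 (hXderiv t ht) i j))
end L
end

section
/- Deterministic specialization of Lemma 4.2: global solvability of the definite matrix Riccati equation. Let T > 0 and let Ã, B, Q̃ : [0,T] → M_n(ℝ) be continuous with Q̃(t) symmetric positive semidefinite for all t, and let η ∈ M_n(ℝ) be symmetric positive semidefinite. Then there exists exactly one continuously differentiable X : [0,T] → M_n(ℝ) with X(T) = η and X'(t) = Ã(t)X(t) + X(t)Ã(t)' − B(t)X(t)B(t)' + X(t)Q̃(t)X(t) for all t ∈ [0,T]. Moreover X(t) is symmetric positive semidefinite for every t ∈ [0,T], and if in addition η is positive definite then X(t) is positive definite for every t ∈ [0,T]. -/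
open Matrix Set Filter

attribute [local instance] Matrix.normedAddCommGroup Matrix.normedSpace

set_option maxHeartbeats 1000000

noncomputable section RiccatiAux
variable {n : ℕ}

local notation "Mat" => Matrix (Fin n) (Fin n) ℝ






-- transpose doesn't change the sup norm
lemma norm_transpose' (M : Mat) : ‖Mᵀ‖ ≤ ‖M‖ := by
  rw [Matrix.norm_le_iff (norm_nonneg M)]
  intro i j
  exact Matrix.norm_entry_le_entrywise_sup_norm M

-- submultiplicativity with factor n
lemma norm_matmul_le (M N : Mat) : ‖M * N‖ ≤ n * ‖M‖ * ‖N‖ := by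
  rw [Matrix.norm_le_iff (by positivity)]
  intro i j
  rw [Matrix.mul_apply]
  calc ‖∑ k, M i k * N k j‖ ≤ ∑ k, ‖M i k * N k j‖ := norm_sum_le _ _
    _ ≤ ∑ _k : Fin n, ‖M‖ * ‖N‖ := by
        refine Finset.sum_le_sum fun k _ => ?_
        rw [norm_mul]
        exact mul_le_mul (Matrix.norm_entry_le_entrywise_sup_norm M)
          (Matrix.norm_entry_le_entrywise_sup_norm N) (norm_nonneg _) (norm_nonneg _)
    _ = n * ‖M‖ * ‖N‖ := by simp [mul_assoc]

-- quadratic form bound : |v ⬝ᵥ M *ᵥ w| ≤ n ‖M‖ √(v⬝v) √(w⬝w); we only need the diagonal version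
lemma quadform_abs_le (M : Mat) (v : Fin n → ℝ) :
    |v ⬝ᵥ M *ᵥ v| ≤ n * ‖M‖ * (v ⬝ᵥ v) := by
  have h1 : |v ⬝ᵥ M *ᵥ v| ≤ ∑ i, ∑ j, ‖M‖ * (|v i| * |v j|) := by
    rw [dotProduct]
    refine (Finset.abs_sum_le_sum_abs _ _).trans ?_
    refine Finset.sum_le_sum fun i _ => ?_
    rw [mulVec, dotProduct, Finset.mul_sum]
    refine (Finset.abs_sum_le_sum_abs _ _).trans ?_
    refine Finset.sum_le_sum fun j _ => ?_
    rw [abs_mul, abs_mul]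
    have := Matrix.norm_entry_le_entrywise_sup_norm M (i := i) (j := j)
    rw [Real.norm_eq_abs] at this
    calc |v i| * (|M i j| * |v j|) ≤ |v i| * (‖M‖ * |v j|) := by
          refine mul_le_mul_of_nonneg_left (mul_le_mul_of_nonneg_right this (abs_nonneg _)) (abs_nonneg _)
      _ = ‖M‖ * (|v i| * |v j|) := by ring
  have h2 : ∑ i, ∑ j, ‖M‖ * (|v i| * |v j|) = ‖M‖ * (∑ i, |v i|) ^ 2 := by
    rw [sq, Finset.sum_mul_sum, Finset.mul_sum]
    refine Finset.sum_congr rfl fun i _ => ?_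
    rw [Finset.mul_sum]
  have h3 : (∑ i, |v i|) ^ 2 ≤ n * (v ⬝ᵥ v) := by
    have := sq_sum_le_card_mul_sum_sq (s := Finset.univ) (f := fun i : Fin n => |v i|)
    simpa [dotProduct, sq, Finset.card_univ] using this
  calc |v ⬝ᵥ M *ᵥ v| ≤ ‖M‖ * (∑ i, |v i|) ^ 2 := by rw [← h2]; exact h1
    _ ≤ ‖M‖ * (n * (v ⬝ᵥ v)) := mul_le_mul_of_nonneg_left h3 (norm_nonneg _)
    _ = n * ‖M‖ * (v ⬝ᵥ v) := by ring





-- symmetric matrix: entries bounded by quadratic form bounds (polarization)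
lemma norm_le_of_quadform (M : Mat) (hsym : Mᵀ = M) (α : ℝ) (hα : 0 ≤ α)
    (h : ∀ v : Fin n → ℝ, |v ⬝ᵥ M *ᵥ v| ≤ α * (v ⬝ᵥ v)) : ‖M‖ ≤ α := by
  rw [Matrix.norm_le_iff hα]
  intro i j
  have key : ∀ v w : Fin n → ℝ, (v + w) ⬝ᵥ M *ᵥ (v + w) - (v - w) ⬝ᵥ M *ᵥ (v - w)
      = 2 * (v ⬝ᵥ M *ᵥ w) + 2 * (w ⬝ᵥ M *ᵥ v) := by
    intro v w
    simp [add_dotProduct, sub_dotProduct, Matrix.mulVec_add, Matrix.mulVec_sub,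
      dotProduct_add, dotProduct_sub]
    ring
  have symdp : ∀ v w : Fin n → ℝ, w ⬝ᵥ M *ᵥ v = v ⬝ᵥ M *ᵥ w := by
    intro v w
    conv_lhs => rw [← hsym]
    rw [Matrix.dotProduct_mulVec, ← Matrix.mulVec_transpose, Matrix.transpose_transpose,
      dotProduct_comm]
  set v : Fin n → ℝ := Pi.single i 1 with hv
  set w : Fin n → ℝ := Pi.single j 1 with hw
  have h4 : 4 * (v ⬝ᵥ M *ᵥ w) = (v + w) ⬝ᵥ M *ᵥ (v + w) - (v - w) ⬝ᵥ M *ᵥ (v - w) := by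
    rw [key, symdp v w]; ring
  have hvw : v ⬝ᵥ M *ᵥ w = M i j := by
    simp [hv, hw, dotProduct, Matrix.mulVec_single, Pi.single_apply, Finset.sum_ite_eq']
  have hvv : v ⬝ᵥ v ≤ 1 := by
    simp [hv, dotProduct, Pi.single_apply, Finset.sum_ite_eq']
  have hww : w ⬝ᵥ w ≤ 1 := by
    simp [hw, dotProduct, Pi.single_apply, Finset.sum_ite_eq']
  have hsum : (v + w) ⬝ᵥ (v + w) + (v - w) ⬝ᵥ (v - w) = 2 * (v ⬝ᵥ v) + 2 * (w ⬝ᵥ w) := by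
    simp [add_dotProduct, sub_dotProduct, dotProduct_add,
      dotProduct_sub, dotProduct_comm]
    ring
  have h5 := h (v + w)
  have h6 := h (v - w)
  have dpnn : ∀ u : Fin n → ℝ, 0 ≤ u ⬝ᵥ u := fun u =>
    Finset.sum_nonneg fun k _ => mul_self_nonneg _
  have : |4 * (M i j)| ≤ α * ((v + w) ⬝ᵥ (v + w)) + α * ((v - w) ⬝ᵥ (v - w)) := by
    rw [← hvw, h4]
    exact (abs_sub _ _).trans (add_le_add h5 h6)
  have : |4 * M i j| ≤ α * 4 := by
    refine this.trans ?_
    have := hsum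
    nlinarith [dpnn (v+w), dpnn (v-w), dpnn v, dpnn w]
  rw [Real.norm_eq_abs]
  rw [abs_mul, abs_of_nonneg (by norm_num : (0:ℝ) ≤ 4)] at this
  linarith [abs_nonneg (M i j)]

-- kernel extraction from vanishing quadratic form
lemma mulVec_eq_zero_of_quadform (M : Mat) (hsym : Mᵀ = M)
    (hpos : ∀ w : Fin n → ℝ, 0 ≤ w ⬝ᵥ M *ᵥ w) (v : Fin n → ℝ)
    (hv : v ⬝ᵥ M *ᵥ v = 0) : M *ᵥ v = 0 := by
  have symdp : ∀ x w : Fin n → ℝ, w ⬝ᵥ M *ᵥ x = x ⬝ᵥ M *ᵥ w := by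
    intro x w
    conv_lhs => rw [← hsym]
    rw [Matrix.dotProduct_mulVec, ← Matrix.mulVec_transpose, Matrix.transpose_transpose,
      dotProduct_comm]
  have key : ∀ w : Fin n → ℝ, w ⬝ᵥ M *ᵥ v = 0 := by
    intro w
    set a := w ⬝ᵥ M *ᵥ w with ha
    set b := w ⬝ᵥ M *ᵥ v with hb
    have hq : ∀ s : ℝ, 0 ≤ a * s ^ 2 + 2 * b * s := by
      intro s
      have := hpos (v + s • w)
      simp only [add_dotProduct, smul_dotProduct, Matrix.mulVec_add,
        Matrix.mulVec_smul, dotProduct_add, dotProduct_smul] at this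
      have hsym2 : v ⬝ᵥ M *ᵥ w = b := (symdp v w).symm
      rw [smul_eq_mul, smul_eq_mul, smul_eq_mul, hv, hsym2] at this
      nlinarith [this]
    by_contra hbne
    have hb0 : b ≠ 0 := hbne
    have ha0 : 0 ≤ a := hpos w
    set s : ℝ := -b / (a + 1) with hs
    have hden : (0:ℝ) < a + 1 := by linarith
    have hcase := hq s
    have h1 : a * s ^ 2 + 2 * b * s = -(b ^ 2) * (a + 2) / (a + 1) ^ 2 := by
      rw [hs]
      field_simp
      ring
    rw [h1] at hcase
    have hb2 : 0 < b ^ 2 := by positivity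
    have hpos2 : 0 < b ^ 2 * (a + 2) / (a + 1) ^ 2 := by positivity
    have : -b ^ 2 * (a + 2) / (a + 1) ^ 2 = -(b ^ 2 * (a + 2) / (a + 1) ^ 2) := by ring
    rw [this] at hcase
    linarith
  have := key (M *ᵥ v)
  have : (M *ᵥ v) ⬝ᵥ (M *ᵥ v) = 0 := this
  exact dotProduct_self_eq_zero.mp this





noncomputable def quadformLM (v : Fin n → ℝ) : Mat →ₗ[ℝ] ℝ where
  toFun M := v ⬝ᵥ M *ᵥ v
  map_add' M N := by simp [Matrix.add_mulVec, dotProduct_add]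
  map_smul' c M := by simp [Matrix.smul_mulVec, dotProduct_smul]

lemma hasDerivWithinAt_quadform {X : ℝ → Mat} {X' : Mat} {s : Set ℝ} {t : ℝ}
    (h : HasDerivWithinAt X X' s t) (v : Fin n → ℝ) :
    HasDerivWithinAt (fun τ => v ⬝ᵥ X τ *ᵥ v) (v ⬝ᵥ X' *ᵥ v) s t := by
  have := ((quadformLM v).toContinuousLinearMap.hasFDerivAt (x := X t)).comp_hasDerivWithinAt t h
  exact this

noncomputable def transposeLM : Mat →ₗ[ℝ] Mat where
  toFun M := Mᵀ
  map_add' M N := by simp [Matrix.transpose_add]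
  map_smul' c M := by simp [Matrix.transpose_smul]

lemma hasDerivWithinAt_transpose {X : ℝ → Mat} {X' : Mat} {s : Set ℝ} {t : ℝ}
    (h : HasDerivWithinAt X X' s t) :
    HasDerivWithinAt (fun τ => (X τ)ᵀ) X'ᵀ s t := by
  have := ((transposeLM (n := n)).toContinuousLinearMap.hasFDerivAt (x := X t)).comp_hasDerivWithinAt t h
  exact this

lemma continuous_quadform_v (M : Mat) :
    Continuous fun v : Fin n → ℝ => v ⬝ᵥ M *ᵥ v := by
  unfold dotProduct Matrix.mulVec
  refine continuous_finset_sum _ fun i _ => ?_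
  exact (continuous_apply i).mul (continuous_finset_sum _ fun j _ =>
    (continuous_const.mul (continuous_apply j)))

lemma isCompact_dpSphere : IsCompact {v : Fin n → ℝ | v ⬝ᵥ v = 1} := by
  have hclosed : IsClosed {v : Fin n → ℝ | v ⬝ᵥ v = 1} := by
    have : Continuous fun v : Fin n → ℝ => v ⬝ᵥ v := by
      unfold dotProduct
      exact continuous_finset_sum _ fun i _ => (continuous_apply i).mul (continuous_apply i)
    exact isClosed_eq this continuous_const
  refine Metric.isCompact_of_isClosed_isBounded hclosed ?_
  rw [Metric.isBounded_iff_subset_closedBall 0]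
  refine ⟨1, fun v hv => ?_⟩
  simp only [Metric.mem_closedBall, dist_zero_right]
  rw [pi_norm_le_iff_of_nonneg (by norm_num)]
  intro i
  rw [Real.norm_eq_abs, abs_le]
  have h1 : v i ^ 2 ≤ 1 := by
    have : v i ^ 2 ≤ v ⬝ᵥ v := by
      rw [dotProduct]
      have : v i ^ 2 = v i * v i := sq (v i)
      rw [this]
      exact Finset.single_le_sum (f := fun j => v j * v j)
        (fun j _ => mul_self_nonneg _) (Finset.mem_univ i)
    rw [hv.out] at this; exact this
  constructor <;> nlinarith




noncomputable def RicV (A B Q : ℝ → Mat) (t : ℝ) (X : Mat) : Mat :=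
  A t * X + X * (A t)ᵀ - B t * X * (B t)ᵀ + X * Q t * X

lemma vecMul_symm {X : Mat} (hX : Xᵀ = X) (v : Fin n → ℝ) : v ᵥ* X = X *ᵥ v := by
  rw [← Matrix.mulVec_transpose, hX]

lemma quadform_RicV {A B Q : ℝ → Mat} {t : ℝ} {X : Mat} (hX : Xᵀ = X)
    {v : Fin n → ℝ} {γ : ℝ} (hv : X *ᵥ v = γ • v) :
    v ⬝ᵥ (RicV A B Q t X) *ᵥ v
      = 2 * γ * (v ⬝ᵥ A t *ᵥ v) - (((B t)ᵀ *ᵥ v) ⬝ᵥ X *ᵥ ((B t)ᵀ *ᵥ v))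
        + γ ^ 2 * (v ⬝ᵥ Q t *ᵥ v) := by
  have hvm : v ᵥ* X = γ • v := by rw [vecMul_symm hX v, hv]
  have p1 : v ⬝ᵥ (A t * X) *ᵥ v = γ * (v ⬝ᵥ A t *ᵥ v) := by
    rw [← Matrix.mulVec_mulVec, hv, Matrix.mulVec_smul, dotProduct_smul, smul_eq_mul]
  have p2 : v ⬝ᵥ (X * (A t)ᵀ) *ᵥ v = γ * (v ⬝ᵥ A t *ᵥ v) := by
    rw [← Matrix.mulVec_mulVec, Matrix.dotProduct_mulVec, hvm, smul_dotProduct,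
      smul_eq_mul, Matrix.mulVec_transpose, Matrix.dotProduct_mulVec v (A t) v]
    congr 1
    exact dotProduct_comm _ _
  have p3 : v ⬝ᵥ (B t * X * (B t)ᵀ) *ᵥ v
      = ((B t)ᵀ *ᵥ v) ⬝ᵥ X *ᵥ ((B t)ᵀ *ᵥ v) := by
    rw [← Matrix.mulVec_mulVec, ← Matrix.mulVec_mulVec, Matrix.dotProduct_mulVec v (B t),
      ← Matrix.mulVec_transpose]
  have p4 : v ⬝ᵥ (X * Q t * X) *ᵥ v = γ ^ 2 * (v ⬝ᵥ Q t *ᵥ v) := by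
    rw [← Matrix.mulVec_mulVec, ← Matrix.mulVec_mulVec, hv, Matrix.dotProduct_mulVec, hvm,
      Matrix.mulVec_smul, smul_dotProduct, dotProduct_smul]
    simp [sq]; ring
  rw [RicV]
  rw [Matrix.add_mulVec, Matrix.sub_mulVec, Matrix.add_mulVec, dotProduct_add,
    dotProduct_sub, dotProduct_add, p1, p2, p3, p4]
  ring

-- quadform of scalar multiples of identity
lemma quadform_smul_one (c : ℝ) (v : Fin n → ℝ) :
    v ⬝ᵥ (c • (1 : Mat)) *ᵥ v = c * (v ⬝ᵥ v) := by
  rw [Matrix.smul_mulVec, Matrix.one_mulVec, dotProduct_smul, smul_eq_mul]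

-- derivative of t ↦ c t • (1 : Mat)
lemma hasDerivWithinAt_smul_one {c : ℝ → ℝ} {c' : ℝ} {s : Set ℝ} {t : ℝ}
    (h : HasDerivWithinAt c c' s t) :
    HasDerivWithinAt (fun τ => c τ • (1 : Mat)) (c' • (1 : Mat)) s t :=
  h.smul_const _






-- scaling
lemma quadform_scale (P : Mat) (w : Fin n → ℝ) (c : ℝ) :
    (c • w) ⬝ᵥ P *ᵥ (c • w) = c ^ 2 * (w ⬝ᵥ P *ᵥ w) := by
  rw [smul_dotProduct, Matrix.mulVec_smul, dotProduct_smul]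
  simp [sq]; ring

lemma quadform_of_unit {P : Mat} {r : ℝ}
    (h : ∀ v : Fin n → ℝ, v ⬝ᵥ v = 1 → r ≤ v ⬝ᵥ P *ᵥ v) :
    ∀ w : Fin n → ℝ, w ≠ 0 → r * (w ⬝ᵥ w) ≤ w ⬝ᵥ P *ᵥ w := by
  intro w hw
  have hww : 0 < w ⬝ᵥ w := by
    rcases (Finset.sum_nonneg fun k _ => mul_self_nonneg (w k)).lt_or_eq with h' | h'
    · exact h'
    · exact absurd (dotProduct_self_eq_zero.mp h'.symm) hw
  set c : ℝ := Real.sqrt (w ⬝ᵥ w) with hc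
  have hcpos : 0 < c := Real.sqrt_pos.mpr hww
  have hc2 : c ^ 2 = w ⬝ᵥ w := Real.sq_sqrt hww.le
  have hu : (c⁻¹ • w) ⬝ᵥ (c⁻¹ • w) = 1 := by
    rw [smul_dotProduct, dotProduct_smul]
    rw [← hc2, smul_eq_mul, smul_eq_mul]; field_simp
  have := h (c⁻¹ • w) hu
  have hq : (c⁻¹ • w) ⬝ᵥ P *ᵥ (c⁻¹ • w) = c⁻¹ ^ 2 * (w ⬝ᵥ P *ᵥ w) := quadform_scale P w c⁻¹
  rw [hq] at this
  have : r * c ^ 2 ≤ w ⬝ᵥ P *ᵥ w := by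
    have h2 := mul_le_mul_of_nonneg_left this (le_of_lt (by positivity : (0:ℝ) < c ^ 2))
    rw [← mul_assoc] at h2
    field_simp at h2
    linarith [h2]
  rwa [hc2] at this

/-- Master barrier lemma. -/
lemma barrier_master {τ T : ℝ} (hτT : τ ≤ T) (hn : 0 < n)
    (M M' : ℝ → Mat)
    (hder : ∀ t ∈ Icc τ T, HasDerivWithinAt M (M' t) (Icc τ T) t)
    (hsym : ∀ t ∈ Icc τ T, (M t)ᵀ = M t)
    (hTpos : ∀ v : Fin n → ℝ, v ⬝ᵥ v = 1 → 0 < v ⬝ᵥ M T *ᵥ v)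
    (hkey : ∀ t ∈ Ico τ T, ∀ v : Fin n → ℝ, v ⬝ᵥ v = 1 →
      M t *ᵥ v = 0 → (∀ w, 0 ≤ w ⬝ᵥ M t *ᵥ w) → v ⬝ᵥ M' t *ᵥ v < 0) :
    ∀ t ∈ Icc τ T, ∀ v : Fin n → ℝ, v ⬝ᵥ v = 1 → 0 < v ⬝ᵥ M t *ᵥ v := by
  set S : Set (Fin n → ℝ) := {v | v ⬝ᵥ v = 1} with hS
  have hSne : S.Nonempty := by
    refine ⟨Pi.single ⟨0, hn⟩ 1, ?_⟩
    simp [hS, dotProduct, Pi.single_apply, Finset.sum_ite_eq']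
  have hScomp : IsCompact S := isCompact_dpSphere
  set m : ℝ → ℝ := fun t => sInf ((fun v => v ⬝ᵥ M t *ᵥ v) '' S) with hm
  have himne : ∀ t, ((fun v => v ⬝ᵥ M t *ᵥ v) '' S).Nonempty := fun t => hSne.image _
  have hbdd : ∀ t, BddBelow ((fun v => v ⬝ᵥ M t *ᵥ v) '' S) := by
    intro t
    refine ⟨-(n * ‖M t‖), ?_⟩
    rintro y ⟨v, hv, rfl⟩
    have := quadform_abs_le (M t) v
    rw [hv.out, mul_one] at this
    linarith [neg_abs_le (v ⬝ᵥ M t *ᵥ v)]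
  have hmle : ∀ t, ∀ v ∈ S, m t ≤ v ⬝ᵥ M t *ᵥ v := fun t v hv =>
    csInf_le (hbdd t) ⟨v, hv, rfl⟩
  have hattain : ∀ t, ∃ v ∈ S, v ⬝ᵥ M t *ᵥ v = m t := by
    intro t
    obtain ⟨v, hvS, hmin⟩ := hScomp.exists_isMinOn hSne (continuous_quadform_v (M t)).continuousOn
    refine ⟨v, hvS, le_antisymm ?_ (hmle t v hvS)⟩
    refine le_csInf (himne t) ?_
    rintro y ⟨w, hw, rfl⟩
    exact hmin hw
  -- Lipschitz-type estimate
  have hlip : ∀ s t : ℝ, m s ≤ m t + n * ‖M s - M t‖ := by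
    intro s t
    obtain ⟨v, hvS, hveq⟩ := hattain t
    have h1 : m s ≤ v ⬝ᵥ M s *ᵥ v := hmle s v hvS
    have h2 : v ⬝ᵥ M s *ᵥ v - v ⬝ᵥ M t *ᵥ v = v ⬝ᵥ (M s - M t) *ᵥ v := by
      rw [Matrix.sub_mulVec, dotProduct_sub]
    have h3 := quadform_abs_le (M s - M t) v
    rw [hvS.out, mul_one] at h3
    have := le_abs_self (v ⬝ᵥ (M s - M t) *ᵥ v)
    linarith [hveq, h1, h2, h3, this]
  have hMcont : ContinuousOn M (Icc τ T) := fun t ht => (hder t ht).continuousWithinAt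
  have hmcont : ContinuousOn m (Icc τ T) := by
    intro t ht
    have hd : Tendsto (fun s => dist (m s) (m t)) (nhdsWithin t (Icc τ T)) (nhds 0) := by
      have hg : Tendsto (fun s => (n : ℝ) * ‖M s - M t‖) (nhdsWithin t (Icc τ T)) (nhds 0) := by
        have : Tendsto (fun s => M s - M t) (nhdsWithin t (Icc τ T)) (nhds 0) := by
          have h0 : ContinuousWithinAt (fun s => M s - M t) (Icc τ T) t :=
            (hMcont t ht).sub continuousWithinAt_const
          have h1 : (fun s => M s - M t) t = 0 := by simp
          unfold ContinuousWithinAt at h0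
          rwa [h1] at h0
        have := this.norm
        simp only [norm_zero] at this
        simpa using this.const_mul (n : ℝ)
      refine squeeze_zero (fun s => dist_nonneg) (fun s => ?_) hg
      rw [Real.dist_eq, abs_le]
      constructor
      · have := hlip t s
        have hnorm : ‖M t - M s‖ = ‖M s - M t‖ := by rw [← norm_neg]; congr 1; abel
        rw [hnorm] at this
        linarith
      · linarith [hlip s t]
    rw [ContinuousWithinAt, tendsto_iff_dist_tendsto_zero]
    exact hd
  -- main argument
  by_contra hcon
  push_neg at hcon
  obtain ⟨t₀, ht₀, v₀, hv₀, hq₀⟩ := hcon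
  set U : Set ℝ := Icc τ T ∩ m ⁻¹' Iic 0 with hU
  have hUne : U.Nonempty := ⟨t₀, ht₀, le_trans (hmle t₀ v₀ hv₀) hq₀⟩
  have hUclosed : IsClosed U := hmcont.preimage_isClosed_of_isClosed isClosed_Icc isClosed_Iic
  have hUcomp : IsCompact U := isCompact_Icc.of_isClosed_subset hUclosed inter_subset_left
  set c := sSup U with hc
  have hcU : c ∈ U := hUcomp.sSup_mem hUne
  have hcIcc : c ∈ Icc τ T := hcU.1
  have hmT : 0 < m T := by
    obtain ⟨v, hvS, hveq⟩ := hattain T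
    rw [← hveq]; exact hTpos v hvS
  have hcT : c < T := by
    rcases lt_or_eq_of_le hcIcc.2 with h | h
    · exact h
    · exfalso; have := hcU.2; rw [h] at this; exact absurd hmT (by simpa using this)
  have hright : ∀ s ∈ Ioc c T, 0 < m s := by
    intro s hs
    by_contra hneg
    push_neg at hneg
    have hsU : s ∈ U := ⟨⟨le_trans hcIcc.1 hs.1.le, hs.2⟩, hneg⟩
    have := le_csSup hUcomp.bddAbove hsU
    exact absurd this (not_le.mpr hs.1)
  have hmc_nonneg : 0 ≤ m c := by
    have htend : Tendsto m (nhdsWithin c (Ioc c T)) (nhds (m c)) :=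
      (hmcont c hcIcc).mono_left (nhdsWithin_mono c (Ioc_subset_Icc_self.trans
        (Icc_subset_Icc hcIcc.1 le_rfl)))
    have hne : (nhdsWithin c (Ioc c T)).NeBot := by
      have h1 : nhdsWithin c (Ioo c T) = nhdsWithin c (Ioi c) :=
        nhdsWithin_Ioo_eq_nhdsGT hcT
      have : (nhdsWithin c (Ioo c T)).NeBot := by rw [h1]; infer_instance
      exact this.mono (nhdsWithin_mono c Ioo_subset_Ioc_self)
    refine ge_of_tendsto htend ?_
    filter_upwards [self_mem_nhdsWithin] with s hs
    exact (hright s hs).le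
  have hmc : m c = 0 := le_antisymm hcU.2 hmc_nonneg
  obtain ⟨v, hvS, hveq⟩ := hattain c
  have hnonneg : ∀ w, 0 ≤ w ⬝ᵥ M c *ᵥ w := by
    intro w
    rcases eq_or_ne w 0 with rfl | hw
    · simp
    · have := quadform_of_unit (P := M c) (r := 0)
        (fun u hu => by rw [← hmc]; exact hmle c u hu) w hw
      simpa using this
  have hker : M c *ᵥ v = 0 :=
    mulVec_eq_zero_of_quadform (M c) (hsym c hcIcc) hnonneg v (by rw [hveq, hmc])
  have hL : v ⬝ᵥ M' c *ᵥ v < 0 := hkey c ⟨hcIcc.1, hcT⟩ v hvS hker hnonneg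
  -- derivative of quadratic form at c within Icc c T
  have hfder : HasDerivWithinAt (fun s => v ⬝ᵥ M s *ᵥ v) (v ⬝ᵥ M' c *ᵥ v) (Icc c T) c :=
    (hasDerivWithinAt_quadform (hder c hcIcc) v).mono (Icc_subset_Icc hcIcc.1 le_rfl)
  rw [hasDerivWithinAt_iff_tendsto_slope] at hfder
  rw [Icc_diff_left] at hfder
  have hslope_nonneg : ∀ᶠ s in nhdsWithin c (Ioc c T), 0 ≤ slope (fun s => v ⬝ᵥ M s *ᵥ v) c s := by
    filter_upwards [self_mem_nhdsWithin] with s hs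
    rw [slope_def_field]
    have hfs : 0 ≤ v ⬝ᵥ M s *ᵥ v := le_trans (hright s hs).le (hmle s v hvS)
    have hfc : v ⬝ᵥ M c *ᵥ v = 0 := by rw [hveq, hmc]
    rw [div_eq_inv_mul]
    have : 0 < s - c := sub_pos.mpr hs.1
    have h0 : 0 ≤ v ⬝ᵥ M s *ᵥ v - v ⬝ᵥ M c *ᵥ v := by rw [hfc]; linarith
    positivity
  have hne : (nhdsWithin c (Ioc c T)).NeBot := by
    have h1 : nhdsWithin c (Ioo c T) = nhdsWithin c (Ioi c) :=
      nhdsWithin_Ioo_eq_nhdsGT hcT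
    have : (nhdsWithin c (Ioo c T)).NeBot := by rw [h1]; infer_instance
    exact this.mono (nhdsWithin_mono c Ioo_subset_Ioc_self)
  have := ge_of_tendsto hfder hslope_nonneg
  exact absurd this (not_le.mpr hL)







lemma RicV_sub (A B Q : ℝ → Mat) (t : ℝ) (X Y : Mat) :
    RicV A B Q t X - RicV A B Q t Y
      = A t * (X - Y) + (X - Y) * (A t)ᵀ - B t * (X - Y) * (B t)ᵀ
        + (X * Q t * (X - Y) + (X - Y) * Q t * Y) := by
  rw [RicV, RicV]
  noncomm_ring

lemma norm_RicV_sub_le {A B Q : ℝ → Mat} {t : ℝ} {CA CB CQ ρ : ℝ}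
    (hA : ‖A t‖ ≤ CA) (hB : ‖B t‖ ≤ CB) (hQ : ‖Q t‖ ≤ CQ) (hρ : 0 ≤ ρ)
    {X Y : Mat} (hX : ‖X‖ ≤ ρ) (hY : ‖Y‖ ≤ ρ) :
    ‖RicV A B Q t X - RicV A B Q t Y‖
      ≤ (2 * n * CA + n ^ 2 * CB ^ 2 + 2 * n ^ 2 * CQ * ρ) * ‖X - Y‖ := by
  have hCA : 0 ≤ CA := le_trans (norm_nonneg _) hA
  have hCB : 0 ≤ CB := le_trans (norm_nonneg _) hB
  have hCQ : 0 ≤ CQ := le_trans (norm_nonneg _) hQ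
  have hD0 : 0 ≤ ‖X - Y‖ := norm_nonneg _
  have hn0 : (0:ℝ) ≤ n := Nat.cast_nonneg n
  have hAT : ‖(A t)ᵀ‖ ≤ CA := (norm_transpose' _).trans hA
  have hBT : ‖(B t)ᵀ‖ ≤ CB := (norm_transpose' _).trans hB
  rw [RicV_sub]
  have h1 : ‖A t * (X - Y)‖ ≤ n * CA * ‖X - Y‖ := by
    refine (norm_matmul_le _ _).trans ?_
    gcongr
  have h2 : ‖(X - Y) * (A t)ᵀ‖ ≤ n * CA * ‖X - Y‖ := by
    refine (norm_matmul_le _ _).trans ?_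
    calc (n:ℝ) * ‖X - Y‖ * ‖(A t)ᵀ‖ ≤ n * ‖X - Y‖ * CA := by gcongr
      _ = n * CA * ‖X - Y‖ := by ring
  have h3 : ‖B t * (X - Y) * (B t)ᵀ‖ ≤ n ^ 2 * CB ^ 2 * ‖X - Y‖ := by
    refine (norm_matmul_le _ _).trans ?_
    have hb1 : ‖B t * (X - Y)‖ ≤ n * CB * ‖X - Y‖ := by
      refine (norm_matmul_le _ _).trans ?_
      gcongr
    calc (n:ℝ) * ‖B t * (X - Y)‖ * ‖(B t)ᵀ‖ ≤ n * (n * CB * ‖X - Y‖) * CB := by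
          gcongr <;> positivity
      _ = n ^ 2 * CB ^ 2 * ‖X - Y‖ := by ring
  have h4 : ‖X * Q t * (X - Y)‖ ≤ n ^ 2 * CQ * ρ * ‖X - Y‖ := by
    refine (norm_matmul_le _ _).trans ?_
    have hq1 : ‖X * Q t‖ ≤ n * ρ * CQ := by
      refine (norm_matmul_le _ _).trans ?_
      gcongr
    calc (n:ℝ) * ‖X * Q t‖ * ‖X - Y‖ ≤ n * (n * ρ * CQ) * ‖X - Y‖ := by gcongr
      _ = n ^ 2 * CQ * ρ * ‖X - Y‖ := by ring
  have h5 : ‖(X - Y) * Q t * Y‖ ≤ n ^ 2 * CQ * ρ * ‖X - Y‖ := by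
    refine (norm_matmul_le _ _).trans ?_
    have hq1 : ‖(X - Y) * Q t‖ ≤ n * ‖X - Y‖ * CQ := by
      refine (norm_matmul_le _ _).trans ?_
      gcongr
    calc (n:ℝ) * ‖(X - Y) * Q t‖ * ‖Y‖ ≤ n * (n * ‖X - Y‖ * CQ) * ρ := by
          gcongr <;> positivity
      _ = n ^ 2 * CQ * ρ * ‖X - Y‖ := by ring
  calc ‖A t * (X - Y) + (X - Y) * (A t)ᵀ - B t * (X - Y) * (B t)ᵀ
        + (X * Q t * (X - Y) + (X - Y) * Q t * Y)‖
      ≤ ‖A t * (X - Y) + (X - Y) * (A t)ᵀ - B t * (X - Y) * (B t)ᵀ‖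
        + ‖X * Q t * (X - Y) + (X - Y) * Q t * Y‖ := norm_add_le _ _
    _ ≤ (‖A t * (X - Y) + (X - Y) * (A t)ᵀ‖ + ‖B t * (X - Y) * (B t)ᵀ‖)
        + (‖X * Q t * (X - Y)‖ + ‖(X - Y) * Q t * Y‖) :=
        add_le_add (norm_sub_le _ _) (norm_add_le _ _)
    _ ≤ ((‖A t * (X - Y)‖ + ‖(X - Y) * (A t)ᵀ‖) + ‖B t * (X - Y) * (B t)ᵀ‖)
        + (‖X * Q t * (X - Y)‖ + ‖(X - Y) * Q t * Y‖) := by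
        gcongr; exact norm_add_le _ _
    _ ≤ (((n:ℝ) * CA * ‖X - Y‖ + n * CA * ‖X - Y‖) + n ^ 2 * CB ^ 2 * ‖X - Y‖)
        + (n ^ 2 * CQ * ρ * ‖X - Y‖ + n ^ 2 * CQ * ρ * ‖X - Y‖) := by
        gcongr
    _ = (2 * n * CA + n ^ 2 * CB ^ 2 + 2 * n ^ 2 * CQ * ρ) * ‖X - Y‖ := by ring

lemma norm_RicV_le {A B Q : ℝ → Mat} {t : ℝ} {CA CB CQ ρ : ℝ}
    (hA : ‖A t‖ ≤ CA) (hB : ‖B t‖ ≤ CB) (hQ : ‖Q t‖ ≤ CQ) (hρ : 0 ≤ ρ)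
    {X : Mat} (hX : ‖X‖ ≤ ρ) :
    ‖RicV A B Q t X‖ ≤ (2 * n * CA + n ^ 2 * CB ^ 2 + 2 * n ^ 2 * CQ * ρ) * ρ := by
  have h0 : RicV A B Q t 0 = 0 := by rw [RicV]; simp
  have h := norm_RicV_sub_le hA hB hQ hρ (X := X) (Y := 0) hX (by simp [hρ])
  rw [h0, sub_zero, sub_zero] at h
  have hCA : 0 ≤ CA := le_trans (norm_nonneg _) hA
  have hCB : 0 ≤ CB := le_trans (norm_nonneg _) hB
  have hCQ : 0 ≤ CQ := le_trans (norm_nonneg _) hQ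
  have hn0 : (0:ℝ) ≤ n := Nat.cast_nonneg n
  refine h.trans ?_
  gcongr

lemma continuousOn_RicV_fixed {A B Q : ℝ → Mat} {s : Set ℝ}
    (hA : ContinuousOn A s) (hB : ContinuousOn B s) (hQ : ContinuousOn Q s) (x : Mat) :
    ContinuousOn (fun t => RicV A B Q t x) s := by
  unfold RicV
  have hAT : ContinuousOn (fun t => (A t)ᵀ) s :=
    (Continuous.matrix_transpose continuous_id).comp_continuousOn hA
  have hBT : ContinuousOn (fun t => (B t)ᵀ) s :=
    (Continuous.matrix_transpose continuous_id).comp_continuousOn hB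
  have c1 : ContinuousOn (fun t => A t * x) s := hA.mul continuousOn_const
  have c2 : ContinuousOn (fun t => x * (A t)ᵀ) s := continuousOn_const.mul hAT
  have c3 : ContinuousOn (fun t => B t * x * (B t)ᵀ) s :=
    (hB.mul continuousOn_const).mul hBT
  have c4 : ContinuousOn (fun t => x * Q t * x) s :=
    (continuousOn_const.mul hQ).mul continuousOn_const
  exact ((c1.add c2).sub c3).add c4







/-- Uniqueness of solutions of the Riccati equation backwards from `T`. -/
lemma ric_unique {A B Q : ℝ → Mat} {τ T CA CB CQ : ℝ} (hτT : τ ≤ T) (hτ : 0 ≤ τ)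
    (hCA : ∀ t ∈ Icc τ T, ‖A t‖ ≤ CA) (hCB : ∀ t ∈ Icc τ T, ‖B t‖ ≤ CB)
    (hCQ : ∀ t ∈ Icc τ T, ‖Q t‖ ≤ CQ)
    {X Y : ℝ → Mat}
    (hX : ∀ t ∈ Icc τ T, HasDerivWithinAt X (RicV A B Q t (X t)) (Icc τ T) t)
    (hY : ∀ t ∈ Icc τ T, HasDerivWithinAt Y (RicV A B Q t (Y t)) (Icc τ T) t)
    (hXY : X T = Y T) : EqOn X Y (Icc τ T) := by
  have hXc : ContinuousOn X (Icc τ T) := fun t ht => (hX t ht).continuousWithinAt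
  have hYc : ContinuousOn Y (Icc τ T) := fun t ht => (hY t ht).continuousWithinAt
  obtain ⟨ρ₁, hρ₁⟩ := isCompact_Icc.exists_bound_of_continuousOn hXc
  obtain ⟨ρ₂, hρ₂⟩ := isCompact_Icc.exists_bound_of_continuousOn hYc
  set ρ : ℝ := max 0 (max ρ₁ ρ₂) with hρdef
  have hρ0 : 0 ≤ ρ := le_max_left _ _
  have hXρ : ∀ t ∈ Icc τ T, ‖X t‖ ≤ ρ := fun t ht =>
    (hρ₁ t ht).trans ((le_max_left _ _).trans (le_max_right _ _))
  have hYρ : ∀ t ∈ Icc τ T, ‖Y t‖ ≤ ρ := fun t ht =>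
    (hρ₂ t ht).trans ((le_max_right _ _).trans (le_max_right _ _))
  set Lr : ℝ := 2 * n * CA + n ^ 2 * CB ^ 2 + 2 * n ^ 2 * CQ * ρ with hLr
  set K : NNReal := Real.toNNReal Lr with hK
  set s : ℝ → Set Mat := fun t => if t ∈ Icc τ T then Metric.closedBall 0 ρ else ∅ with hs
  have hLrK : Lr ≤ (K : ℝ) := Real.le_coe_toNNReal Lr
  have hv : ∀ t, LipschitzOnWith K (fun M => RicV A B Q t M) (s t) := by
    intro t
    by_cases ht : t ∈ Icc τ T
    · rw [hs]
      simp only [if_pos ht]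
      rw [lipschitzOnWith_iff_dist_le_mul]
      intro x hx y hy
      rw [dist_eq_norm, dist_eq_norm]
      refine (norm_RicV_sub_le (hCA t ht) (hCB t ht) (hCQ t ht) hρ0 ?_ ?_).trans ?_
      · simpa [dist_eq_norm] using hx
      · simpa [dist_eq_norm] using hy
      · exact mul_le_mul_of_nonneg_right hLrK (norm_nonneg _)
    · rw [hs]; simp only [if_neg ht]; exact lipschitzOnWith_empty K _
  have key : ∀ t ∈ Ioc τ T, Icc τ T ∈ nhdsWithin t (Iic t) := by
    intro t ht
    rw [mem_nhdsWithin]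
    exact ⟨Ioi τ, isOpen_Ioi, ht.1, fun x hx => ⟨le_of_lt hx.1, le_trans hx.2 ht.2⟩⟩
  refine ODE_solution_unique_of_mem_Icc_left (fun t _ => hv t) hXc
    (fun t ht => (hX t (Ioc_subset_Icc_self ht)).mono_of_mem_nhdsWithin (key t ht))
    (fun t ht => by
      rw [hs]; simp only [if_pos (Ioc_subset_Icc_self ht : t ∈ Icc τ T)]
      simpa [Metric.mem_closedBall, dist_eq_norm] using hXρ t (Ioc_subset_Icc_self ht))
    hYc
    (fun t ht => (hY t (Ioc_subset_Icc_self ht)).mono_of_mem_nhdsWithin (key t ht))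
    (fun t ht => by
      rw [hs]; simp only [if_pos (Ioc_subset_Icc_self ht : t ∈ Icc τ T)]
      simpa [Metric.mem_closedBall, dist_eq_norm] using hYρ t (Ioc_subset_Icc_self ht))
    hXY

lemma RicV_transpose {A B Q : ℝ → Mat} {t : ℝ} (hQ : (Q t)ᵀ = Q t) (X : Mat) :
    (RicV A B Q t X)ᵀ = RicV A B Q t Xᵀ := by
  rw [RicV, RicV]
  simp only [Matrix.transpose_add, Matrix.transpose_sub, Matrix.transpose_mul,
    Matrix.transpose_transpose]
  rw [hQ]
  noncomm_ring


/-- Any solution is symmetric, provided `Q` and `η` are. -/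
lemma ric_symm {A B Q : ℝ → Mat} {τ T CA CB CQ : ℝ} (hτT : τ ≤ T) (hτ : 0 ≤ τ)
    (hCA : ∀ t ∈ Icc τ T, ‖A t‖ ≤ CA) (hCB : ∀ t ∈ Icc τ T, ‖B t‖ ≤ CB)
    (hCQ : ∀ t ∈ Icc τ T, ‖Q t‖ ≤ CQ)
    (hQsym : ∀ t ∈ Icc τ T, (Q t)ᵀ = Q t)
    {η : Mat} (hηsym : ηᵀ = η) {X : ℝ → Mat} (hXT : X T = η)
    (hX : ∀ t ∈ Icc τ T, HasDerivWithinAt X (RicV A B Q t (X t)) (Icc τ T) t) :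
    ∀ t ∈ Icc τ T, (X t)ᵀ = X t := by
  have hY : ∀ t ∈ Icc τ T, HasDerivWithinAt (fun s => (X s)ᵀ)
      (RicV A B Q t ((X t)ᵀ)) (Icc τ T) t := by
    intro t ht
    have := hasDerivWithinAt_transpose (hX t ht)
    rwa [RicV_transpose (hQsym t ht)] at this
  have := ric_unique hτT hτ hCA hCB hCQ hY hX (by rw [hXT, hηsym])
  intro t ht
  exact this ht










lemma ric_exists {A B Q : ℝ → Mat} {T : ℝ} (hT : 0 ≤ T) (η : Mat) {R₀ : ℝ} (hR₀ : 0 ≤ R₀)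
    (hA : ContinuousOn A (Icc 0 T)) (hB : ContinuousOn B (Icc 0 T))
    (hQ : ContinuousOn Q (Icc 0 T))
    (hbound : ∀ τ ∈ Icc 0 T, ∀ X : ℝ → Mat, X T = η →
      (∀ t ∈ Icc τ T, HasDerivWithinAt X (RicV A B Q t (X t)) (Icc τ T) t) →
      ∀ t ∈ Icc τ T, ‖X t‖ ≤ R₀) :
    ∃ X : ℝ → Mat, X T = η ∧
      ∀ t ∈ Icc 0 T, HasDerivWithinAt X (RicV A B Q t (X t)) (Icc 0 T) t := by
  obtain ⟨CA, hCA⟩ := isCompact_Icc.exists_bound_of_continuousOn hA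
  obtain ⟨CB, hCB⟩ := isCompact_Icc.exists_bound_of_continuousOn hB
  obtain ⟨CQ, hCQ⟩ := isCompact_Icc.exists_bound_of_continuousOn hQ
  have h0T : (0:ℝ) ∈ Icc 0 T := ⟨le_rfl, hT⟩
  have hCA0 : 0 ≤ CA := le_trans (norm_nonneg _) (hCA 0 h0T)
  have hCB0 : 0 ≤ CB := le_trans (norm_nonneg _) (hCB 0 h0T)
  have hCQ0 : 0 ≤ CQ := le_trans (norm_nonneg _) (hCQ 0 h0T)
  set ρ : ℝ := R₀ + 1 with hρdef
  have hρ0 : 0 ≤ ρ := by positivity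
  set Lr : ℝ := 2 * n * CA + n ^ 2 * CB ^ 2 + 2 * n ^ 2 * CQ * ρ with hLrdef
  have hLr0 : 0 ≤ Lr := by positivity
  set C₀ : ℝ := Lr * ρ + 1 with hC₀def
  have hC₀pos : 0 < C₀ := by positivity
  set δ : ℝ := 1 / C₀ with hδdef
  have hδpos : 0 < δ := by positivity
  set K : NNReal := Real.toNNReal Lr with hKdef
  have main : ∀ k : ℕ, ∃ X : ℝ → Mat, X T = η ∧
      ∀ t ∈ Icc (max 0 (T - k * δ)) T,
        HasDerivWithinAt X (RicV A B Q t (X t)) (Icc (max 0 (T - k * δ)) T) t := by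
    intro k
    induction k with
    | zero =>
      refine ⟨fun _ => η, rfl, ?_⟩
      intro t ht
      simp only [Nat.cast_zero, zero_mul, sub_zero, max_eq_right hT] at ht ⊢
      rw [Icc_self] at ht ⊢
      refine hasDerivWithinAt_iff_tendsto_slope.mpr ?_
      have ht' : t = T := ht
      have : ({T} : Set ℝ) \ {t} = ∅ := by rw [ht']; simp
      rw [this, nhdsWithin_empty]
      exact tendsto_bot
    | succ k ih =>
      obtain ⟨X, hXT, hX⟩ := ih
      set τ : ℝ := max 0 (T - k * δ) with hτdef
      have hτ0 : 0 ≤ τ := le_max_left _ _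
      have hkδ : 0 ≤ (k:ℝ) * δ := by positivity
      have hτT : τ ≤ T := max_le hT (by linarith)
      by_cases hτzero : τ ≤ 0
      · have hτeq : τ = 0 := le_antisymm hτzero hτ0
        have hnew : max 0 (T - ((k:ℕ)+1 : ℕ) * δ) = 0 := by
          have h1 : T - (k:ℝ) * δ ≤ 0 := by
            by_contra hcon
            push_neg at hcon
            have : τ = T - (k:ℝ)*δ := max_eq_right hcon.le
            rw [this] at hτeq; linarith
          refine max_eq_left ?_
          push_cast
          nlinarith [hδpos.le]
        refine ⟨X, hXT, ?_⟩
        rw [hnew, ← hτeq]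
        exact hX
      · push_neg at hτzero
        have hτIcc : τ ∈ Icc (0:ℝ) T := ⟨hτ0, hτT⟩
        have hbd : ‖X τ‖ ≤ R₀ :=
          hbound τ hτIcc X hXT hX τ (left_mem_Icc.mpr hτT)
        set τ' : ℝ := max 0 (τ - δ) with hτ'def
        have hτ'0 : 0 ≤ τ' := le_max_left _ _
        have hτ'τ : τ' ≤ τ := max_le hτ0 (by linarith)
        have hsub : Icc τ' τ ⊆ Icc 0 T := fun s hs => ⟨le_trans hτ'0 hs.1, le_trans hs.2 hτT⟩
        have hballsub : ∀ x : Mat, x ∈ Metric.closedBall (X τ) 1 → ‖x‖ ≤ ρ := by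
          intro x hx
          rw [Metric.mem_closedBall, dist_eq_norm] at hx
          have h2 : ‖x‖ - ‖X τ‖ ≤ ‖x - X τ‖ := norm_sub_norm_le x (X τ)
          rw [hρdef]
          linarith
        have hPL : IsPicardLindelof (fun t M => RicV A B Q t M) (tmin := τ') (tmax := τ)
            ⟨τ, hτ'τ, le_rfl⟩ (X τ) 1 0 C₀.toNNReal K := by
          refine ⟨?_, ?_, ?_, ?_⟩
          · intro t ht
            rw [lipschitzOnWith_iff_dist_le_mul]
            intro x hx y hy
            rw [dist_eq_norm, dist_eq_norm]
            have htIcc : t ∈ Icc 0 T := hsub ⟨ht.1, ht.2⟩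
            refine (norm_RicV_sub_le (hCA t htIcc) (hCB t htIcc) (hCQ t htIcc) hρ0
              (hballsub x (by simpa using hx)) (hballsub y (by simpa using hy))).trans ?_
            exact mul_le_mul_of_nonneg_right (Real.le_coe_toNNReal Lr) (norm_nonneg _)
          · intro x hx
            exact (continuousOn_RicV_fixed hA hB hQ x).mono hsub
          · intro t ht x hx
            have htIcc : t ∈ Icc 0 T := hsub ⟨ht.1, ht.2⟩
            refine (norm_RicV_le (hCA t htIcc) (hCB t htIcc) (hCQ t htIcc) hρ0
              (hballsub x (by simpa using hx))).trans (le_trans ?_ (Real.le_coe_toNNReal C₀))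
            rw [hC₀def, ← hLrdef]; linarith
          · show (C₀.toNNReal : ℝ) * max (τ - τ) (τ - τ') ≤ ((1 : NNReal) : ℝ) - ((0 : NNReal) : ℝ)
            rw [Real.coe_toNNReal _ hC₀pos.le, NNReal.coe_one, NNReal.coe_zero, sub_zero]
            have h1 : τ - τ' ≤ δ := by
              have : τ - δ ≤ τ' := le_max_right _ _
              linarith
            have h2 : max (τ - τ) (τ - τ') ≤ δ := by
              rw [sub_self]
              exact max_le hδpos.le h1
            calc C₀ * max (τ - τ) (τ - τ') ≤ C₀ * δ := by gcongr
              _ = 1 := by rw [hδdef]; field_simp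
        obtain ⟨g, hgτ', hg⟩ := hPL.exists_eq_forall_mem_Icc_hasDerivWithinAt₀
        have hgτ : g τ = X τ := hgτ'
        set Y : ℝ → Mat := fun t => if t < τ then g t else X t with hYdef
        have hYT : Y T = η := by
          show (if T < τ then g T else X T) = η
          rw [if_neg (not_lt.mpr hτT)]
          exact hXT
        have hEg : EqOn Y g (Icc τ' τ) := by
          intro s hs
          show (if s < τ then g s else X s) = g s
          by_cases h : s < τ
          · rw [if_pos h]
          · have hsτ : s = τ := le_antisymm hs.2 (not_lt.mp h)
            rw [if_neg h, hsτ, hgτ]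
        have hEX : EqOn Y X (Icc τ T) := by
          intro s hs
          show (if s < τ then g s else X s) = X s
          rw [if_neg (not_lt.mpr hs.1)]
        have hunion : Icc τ' τ ∪ Icc τ T = Icc τ' T := Icc_union_Icc_eq_Icc hτ'τ hτT
        have hτ'new : max 0 (T - ((k + 1 : ℕ) : ℝ) * δ) = τ' := by
          have hτval : τ = T - (k:ℝ) * δ := by
            rcases max_cases (0:ℝ) (T - (k:ℝ)*δ) with ⟨h1, _⟩ | ⟨h1, _⟩
            · rw [hτdef] at hτzero; rw [h1] at hτzero; linarith [hτzero]
            · rw [hτdef, h1]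
          rw [hτ'def, hτval]
          push_cast
          ring_nf
        refine ⟨Y, hYT, ?_⟩
        rw [hτ'new]
        intro t ht
        have d1 : HasDerivWithinAt Y (RicV A B Q t (Y t)) (Icc τ' τ) t := by
          by_cases hc : t ∈ Icc τ' τ
          · have h1 := (hg t hc).congr (fun s hs => hEg hs) (hEg hc)
            rwa [← hEg hc] at h1
          · have : t ∉ closure (Icc τ' τ) := by rwa [isClosed_Icc.closure_eq]
            exact HasFDerivWithinAt.of_notMem_closure this
        have d2 : HasDerivWithinAt Y (RicV A B Q t (Y t)) (Icc τ T) t := by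
          by_cases hc : t ∈ Icc τ T
          · have h1 := (hX t hc).congr (fun s hs => hEX hs) (hEX hc)
            rwa [← hEX hc] at h1
          · have : t ∉ closure (Icc τ T) := by rwa [isClosed_Icc.closure_eq]
            exact HasFDerivWithinAt.of_notMem_closure this
        have := d1.union d2
        rwa [hunion] at this
  obtain ⟨k, hk⟩ := exists_nat_ge (T / δ)
  obtain ⟨X, hXT, hX⟩ := main k
  have hzero : max 0 (T - (k:ℝ) * δ) = 0 := by
    refine max_eq_left ?_
    rw [div_le_iff₀ hδpos] at hk
    linarith
  rw [hzero] at hX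
  exact ⟨X, hXT, hX⟩








lemma hasDerivAt_expaux (κ ε T t : ℝ) :
    HasDerivAt (fun s => ε * Real.exp (κ * (T - s))) (-(κ * (ε * Real.exp (κ * (T - t))))) t := by
  have h1 : HasDerivAt (fun s : ℝ => κ * (T - s)) (-κ) t := by
    simpa using ((hasDerivAt_id t).const_sub T).const_mul κ
  have h2 := h1.exp
  have h3 := h2.const_mul ε
  exact h3.congr_deriv (by ring)

lemma quadform_add_smul_one (X : Mat) (c : ℝ) (v : Fin n → ℝ) :
    v ⬝ᵥ (X + c • 1) *ᵥ v = v ⬝ᵥ X *ᵥ v + c * (v ⬝ᵥ v) := by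
  rw [Matrix.add_mulVec, dotProduct_add, ← quadform_smul_one c v]

lemma quadform_sub_smul_one (X : Mat) (c : ℝ) (v : Fin n → ℝ) :
    v ⬝ᵥ (X - c • 1) *ᵥ v = v ⬝ᵥ X *ᵥ v - c * (v ⬝ᵥ v) := by
  rw [Matrix.sub_mulVec, dotProduct_sub, ← quadform_smul_one c v]

lemma quadform_smul_one_sub (X : Mat) (c : ℝ) (v : Fin n → ℝ) :
    v ⬝ᵥ (c • 1 - X) *ᵥ v = c * (v ⬝ᵥ v) - v ⬝ᵥ X *ᵥ v := by
  rw [Matrix.sub_mulVec, dotProduct_sub, ← quadform_smul_one c v]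

lemma mulVec_add_smul_one_eq_zero {X : Mat} {c : ℝ} {v : Fin n → ℝ}
    (h : (X + c • 1) *ᵥ v = 0) : X *ᵥ v = (-c) • v := by
  rw [Matrix.add_mulVec, Matrix.smul_mulVec, Matrix.one_mulVec] at h
  rw [neg_smul]
  exact eq_neg_of_add_eq_zero_left h

lemma mulVec_smul_one_sub_eq_zero {X : Mat} {c : ℝ} {v : Fin n → ℝ}
    (h : (c • 1 - X) *ᵥ v = 0) : X *ᵥ v = c • v := by
  rw [Matrix.sub_mulVec, Matrix.smul_mulVec, Matrix.one_mulVec] at h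
  exact (sub_eq_zero.mp h).symm

lemma mulVec_sub_smul_one_eq_zero {X : Mat} {c : ℝ} {v : Fin n → ℝ}
    (h : (X - c • 1) *ᵥ v = 0) : X *ᵥ v = c • v := by
  rw [Matrix.sub_mulVec, Matrix.smul_mulVec, Matrix.one_mulVec] at h
  exact sub_eq_zero.mp h

/-- Lower barrier: the solution stays above `-ε e^{κ(T-t)}`. -/
lemma ric_lower {A B Q : ℝ → Mat} {τ T a b2 q κ : ℝ} (hn : 0 < n)
    (hτ0 : 0 ≤ τ) (hτT : τ ≤ T)
    (ha0 : 0 ≤ a) (hb20 : 0 ≤ b2) (hq0 : 0 ≤ q)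
    (hκ : κ = 2 * a + b2 + q + 1)
    (haf : ∀ t ∈ Icc τ T, ∀ v : Fin n → ℝ, v ⬝ᵥ v = 1 → |v ⬝ᵥ A t *ᵥ v| ≤ a)
    (hbf : ∀ t ∈ Icc τ T, ∀ v : Fin n → ℝ, v ⬝ᵥ v = 1 →
      ((B t)ᵀ *ᵥ v) ⬝ᵥ ((B t)ᵀ *ᵥ v) ≤ b2)
    (hqf0 : ∀ t ∈ Icc τ T, ∀ v : Fin n → ℝ, 0 ≤ v ⬝ᵥ Q t *ᵥ v)
    (hqf : ∀ t ∈ Icc τ T, ∀ v : Fin n → ℝ, v ⬝ᵥ v = 1 → v ⬝ᵥ Q t *ᵥ v ≤ q)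
    {η : Mat} (hηq : ∀ v : Fin n → ℝ, 0 ≤ v ⬝ᵥ η *ᵥ v)
    {X : ℝ → Mat} (hXT : X T = η)
    (hX : ∀ t ∈ Icc τ T, HasDerivWithinAt X (RicV A B Q t (X t)) (Icc τ T) t)
    (hsym : ∀ t ∈ Icc τ T, (X t)ᵀ = X t)
    {ε : ℝ} (hε : 0 < ε) (hεle : ε ≤ Real.exp (-(κ * T))) :
    ∀ t ∈ Icc τ T, ∀ v : Fin n → ℝ, v ⬝ᵥ v = 1 →
      -(ε * Real.exp (κ * (T - t))) < v ⬝ᵥ X t *ᵥ v := by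
  have hκ0 : 0 < κ := by rw [hκ]; linarith
  set c : ℝ → ℝ := fun t => ε * Real.exp (κ * (T - t)) with hcdef
  have hc_pos : ∀ t, 0 < c t := fun t => by positivity
  have hc_le_one : ∀ t, 0 ≤ t → c t ≤ 1 := by
    intro t ht
    have : c t ≤ Real.exp (-(κ * T)) * Real.exp (κ * (T - t)) := by
      rw [hcdef]
      exact mul_le_mul_of_nonneg_right hεle (Real.exp_nonneg _)
    rw [← Real.exp_add] at this
    refine this.trans ?_
    rw [show -(κ * T) + κ * (T - t) = -(κ * t) by ring]
    rw [Real.exp_le_one_iff]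
    have : 0 ≤ κ * t := by positivity
    linarith
  set M : ℝ → Mat := fun t => X t + c t • 1 with hMdef
  set M' : ℝ → Mat := fun t => RicV A B Q t (X t) + (-(κ * c t)) • 1 with hM'def
  have key : ∀ t ∈ Icc τ T, ∀ v : Fin n → ℝ, v ⬝ᵥ v = 1 → 0 < v ⬝ᵥ M t *ᵥ v := by
    refine barrier_master hτT hn M M' ?_ ?_ ?_ ?_
    · intro t ht
      exact (hX t ht).add ((hasDerivAt_expaux κ ε T t).hasDerivWithinAt.smul_const (1 : Mat))
    · intro t ht
      rw [hMdef]
      simp only [Matrix.transpose_add, Matrix.transpose_smul, Matrix.transpose_one]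
      rw [hsym t ht]
    · intro v hv
      have h1 : v ⬝ᵥ M T *ᵥ v = v ⬝ᵥ X T *ᵥ v + c T * (v ⬝ᵥ v) := quadform_add_smul_one _ _ _
      rw [h1, hXT, hv, mul_one]
      have := hηq v
      linarith [hc_pos T]
    · intro t ht v hv hMv hMnn
      have htIcc : t ∈ Icc τ T := ⟨ht.1, ht.2.le⟩
      have hXv : X t *ᵥ v = (-(c t)) • v := mulVec_add_smul_one_eq_zero hMv
      have hquad := quadform_RicV (A := A) (B := B) (Q := Q) (t := t) (hsym t htIcc) hXv
      have hM'q : v ⬝ᵥ M' t *ᵥ v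
          = v ⬝ᵥ (RicV A B Q t (X t)) *ᵥ v + (-(κ * c t)) * (v ⬝ᵥ v) :=
        quadform_add_smul_one _ _ _
      rw [hM'q, hquad, hv, mul_one]
      set w : Fin n → ℝ := (B t)ᵀ *ᵥ v with hwdef
      have hw1 : 0 ≤ w ⬝ᵥ M t *ᵥ w := hMnn w
      have hw2 : w ⬝ᵥ M t *ᵥ w = w ⬝ᵥ X t *ᵥ w + c t * (w ⬝ᵥ w) := quadform_add_smul_one _ _ _
      have hwb : w ⬝ᵥ w ≤ b2 := hbf t htIcc v hv
      have hww0 : 0 ≤ w ⬝ᵥ w := Finset.sum_nonneg fun k _ => mul_self_nonneg _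
      have hXw : -(w ⬝ᵥ X t *ᵥ w) ≤ c t * b2 := by
        rw [hw2] at hw1
        nlinarith [hc_pos t]
      have hA : |v ⬝ᵥ A t *ᵥ v| ≤ a := haf t htIcc v hv
      have hQ1 : 0 ≤ v ⬝ᵥ Q t *ᵥ v := hqf0 t htIcc v
      have hQ2 : v ⬝ᵥ Q t *ᵥ v ≤ q := hqf t htIcc v hv
      have hc1 : c t ≤ 1 := hc_le_one t (le_trans hτ0 ht.1)
      have hcp := hc_pos t
      have habs := abs_le.mp hA
      have p1 : 0 ≤ c t * (v ⬝ᵥ A t *ᵥ v + a) := mul_nonneg hcp.le (by linarith [habs.1])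
      have p2 : 0 ≤ c t * (1 - c t) * (v ⬝ᵥ Q t *ᵥ v) :=
        mul_nonneg (mul_nonneg hcp.le (by linarith)) hQ1
      have p3 : 0 ≤ c t * (q - v ⬝ᵥ Q t *ᵥ v) := mul_nonneg hcp.le (by linarith)
      nlinarith [p1, p2, p3, hXw, hcp]
  intro t ht v hv
  have := key t ht v hv
  rw [quadform_add_smul_one, hv, mul_one] at this
  simp only [hcdef] at this
  linarith

/-- Upper barrier: the solution stays below `U e^{κ(T-t)}`. -/
lemma ric_upper {A B Q : ℝ → Mat} {τ T a b2 q κ U : ℝ} (hn : 0 < n)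
    (hτ0 : 0 ≤ τ) (hτT : τ ≤ T)
    (ha0 : 0 ≤ a) (hb20 : 0 ≤ b2) (hq0 : 0 ≤ q) (hU : 0 < U)
    (hκ : κ = 2 * a + b2 + q + 1)
    (haf : ∀ t ∈ Icc τ T, ∀ v : Fin n → ℝ, v ⬝ᵥ v = 1 → |v ⬝ᵥ A t *ᵥ v| ≤ a)
    (hbf : ∀ t ∈ Icc τ T, ∀ v : Fin n → ℝ, v ⬝ᵥ v = 1 →
      ((B t)ᵀ *ᵥ v) ⬝ᵥ ((B t)ᵀ *ᵥ v) ≤ b2)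
    (hqf0 : ∀ t ∈ Icc τ T, ∀ v : Fin n → ℝ, 0 ≤ v ⬝ᵥ Q t *ᵥ v)
    {η : Mat} (hηU : ∀ v : Fin n → ℝ, v ⬝ᵥ v = 1 → v ⬝ᵥ η *ᵥ v < U)
    {X : ℝ → Mat} (hXT : X T = η)
    (hX : ∀ t ∈ Icc τ T, HasDerivWithinAt X (RicV A B Q t (X t)) (Icc τ T) t)
    (hsym : ∀ t ∈ Icc τ T, (X t)ᵀ = X t) :
    ∀ t ∈ Icc τ T, ∀ v : Fin n → ℝ, v ⬝ᵥ v = 1 →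
      v ⬝ᵥ X t *ᵥ v < U * Real.exp (κ * (T - t)) := by
  have hκ0 : 0 < κ := by rw [hκ]; linarith
  set u : ℝ → ℝ := fun t => U * Real.exp (κ * (T - t)) with hudef
  have hu_pos : ∀ t, 0 < u t := fun t => by positivity
  set M : ℝ → Mat := fun t => u t • 1 - X t with hMdef
  set M' : ℝ → Mat := fun t => (-(κ * u t)) • 1 - RicV A B Q t (X t) with hM'def
  have key : ∀ t ∈ Icc τ T, ∀ v : Fin n → ℝ, v ⬝ᵥ v = 1 → 0 < v ⬝ᵥ M t *ᵥ v := by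
    refine barrier_master hτT hn M M' ?_ ?_ ?_ ?_
    · intro t ht
      exact ((hasDerivAt_expaux κ U T t).hasDerivWithinAt.smul_const (1 : Mat)).sub (hX t ht)
    · intro t ht
      rw [hMdef]
      simp only [Matrix.transpose_sub, Matrix.transpose_smul, Matrix.transpose_one]
      rw [hsym t ht]
    · intro v hv
      have h1 : v ⬝ᵥ M T *ᵥ v = u T * (v ⬝ᵥ v) - v ⬝ᵥ X T *ᵥ v := quadform_smul_one_sub _ _ _
      rw [h1, hXT, hv, mul_one]
      have huT : u T = U := by
        rw [hudef]; simp
      rw [huT]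
      linarith [hηU v hv]
    · intro t ht v hv hMv hMnn
      have htIcc : t ∈ Icc τ T := ⟨ht.1, ht.2.le⟩
      have hXv : X t *ᵥ v = u t • v := mulVec_smul_one_sub_eq_zero hMv
      have hquad := quadform_RicV (A := A) (B := B) (Q := Q) (t := t) (hsym t htIcc) hXv
      have hM'q : v ⬝ᵥ M' t *ᵥ v
          = (-(κ * u t)) * (v ⬝ᵥ v) - v ⬝ᵥ (RicV A B Q t (X t)) *ᵥ v :=
        quadform_smul_one_sub _ _ _
      rw [hM'q, hquad, hv, mul_one]
      set w : Fin n → ℝ := (B t)ᵀ *ᵥ v with hwdef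
      have hw1 : 0 ≤ w ⬝ᵥ M t *ᵥ w := hMnn w
      have hw2 : w ⬝ᵥ M t *ᵥ w = u t * (w ⬝ᵥ w) - w ⬝ᵥ X t *ᵥ w := quadform_smul_one_sub _ _ _
      have hwb : w ⬝ᵥ w ≤ b2 := hbf t htIcc v hv
      have hww0 : 0 ≤ w ⬝ᵥ w := Finset.sum_nonneg fun k _ => mul_self_nonneg _
      have hup := hu_pos t
      have hXw : w ⬝ᵥ X t *ᵥ w ≤ u t * b2 := by
        rw [hw2] at hw1
        nlinarith
      have hA := abs_le.mp (haf t htIcc v hv)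
      have hQ1 : 0 ≤ v ⬝ᵥ Q t *ᵥ v := hqf0 t htIcc v
      have p1 : 0 ≤ u t * (v ⬝ᵥ A t *ᵥ v + a) := mul_nonneg hup.le (by linarith [hA.1])
      have p2 : 0 ≤ u t ^ 2 * (v ⬝ᵥ Q t *ᵥ v) := mul_nonneg (sq_nonneg _) hQ1
      nlinarith [p1, p2, hXw, hup]
  intro t ht v hv
  have := key t ht v hv
  rw [quadform_smul_one_sub, hv, mul_one] at this
  simp only [hudef] at this
  linarith

/-- Positive-definiteness barrier: the solution stays above `δ e^{-κ'(T-t)} > 0`. -/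
lemma ric_posdef {A B Q : ℝ → Mat} {τ T a q κ' δ : ℝ} (hn : 0 < n)
    (hτ0 : 0 ≤ τ) (hτT : τ ≤ T)
    (ha0 : 0 ≤ a) (hq0 : 0 ≤ q) (hδ0 : 0 < δ) (hδ1 : δ ≤ 1)
    (hκ' : κ' = 2 * a + q + 1)
    (haf : ∀ t ∈ Icc τ T, ∀ v : Fin n → ℝ, v ⬝ᵥ v = 1 → |v ⬝ᵥ A t *ᵥ v| ≤ a)
    (hqf0 : ∀ t ∈ Icc τ T, ∀ v : Fin n → ℝ, 0 ≤ v ⬝ᵥ Q t *ᵥ v)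
    (hqf : ∀ t ∈ Icc τ T, ∀ v : Fin n → ℝ, v ⬝ᵥ v = 1 → v ⬝ᵥ Q t *ᵥ v ≤ q)
    {η : Mat} (hηδ : ∀ v : Fin n → ℝ, v ⬝ᵥ v = 1 → δ < v ⬝ᵥ η *ᵥ v)
    {X : ℝ → Mat} (hXT : X T = η)
    (hX : ∀ t ∈ Icc τ T, HasDerivWithinAt X (RicV A B Q t (X t)) (Icc τ T) t)
    (hsym : ∀ t ∈ Icc τ T, (X t)ᵀ = X t) :
    ∀ t ∈ Icc τ T, ∀ v : Fin n → ℝ, v ⬝ᵥ v = 1 →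
      δ * Real.exp ((-κ') * (T - t)) < v ⬝ᵥ X t *ᵥ v := by
  have hκ'0 : 0 < κ' := by rw [hκ']; linarith
  set d : ℝ → ℝ := fun t => δ * Real.exp ((-κ') * (T - t)) with hddef
  have hd_pos : ∀ t, 0 < d t := fun t => by positivity
  have hd_le_one : ∀ t, t ≤ T → d t ≤ 1 := by
    intro t ht
    have h1 : Real.exp ((-κ') * (T - t)) ≤ 1 := by
      rw [Real.exp_le_one_iff]
      nlinarith
    have : d t ≤ δ * 1 := mul_le_mul_of_nonneg_left h1 hδ0.le
    linarith
  set M : ℝ → Mat := fun t => X t - d t • 1 with hMdef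
  set M' : ℝ → Mat := fun t => RicV A B Q t (X t) - (-((-κ') * d t)) • 1 with hM'def
  have key : ∀ t ∈ Icc τ T, ∀ v : Fin n → ℝ, v ⬝ᵥ v = 1 → 0 < v ⬝ᵥ M t *ᵥ v := by
    refine barrier_master hτT hn M M' ?_ ?_ ?_ ?_
    · intro t ht
      exact (hX t ht).sub ((hasDerivAt_expaux (-κ') δ T t).hasDerivWithinAt.smul_const (1 : Mat))
    · intro t ht
      rw [hMdef]
      simp only [Matrix.transpose_sub, Matrix.transpose_smul, Matrix.transpose_one]
      rw [hsym t ht]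
    · intro v hv
      have h1 : v ⬝ᵥ M T *ᵥ v = v ⬝ᵥ X T *ᵥ v - d T * (v ⬝ᵥ v) := quadform_sub_smul_one _ _ _
      rw [h1, hXT, hv, mul_one]
      have hdT : d T = δ := by rw [hddef]; simp
      rw [hdT]
      linarith [hηδ v hv]
    · intro t ht v hv hMv hMnn
      have htIcc : t ∈ Icc τ T := ⟨ht.1, ht.2.le⟩
      have hXv : X t *ᵥ v = d t • v := mulVec_sub_smul_one_eq_zero hMv
      have hquad := quadform_RicV (A := A) (B := B) (Q := Q) (t := t) (hsym t htIcc) hXv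
      have hM'q : v ⬝ᵥ M' t *ᵥ v
          = v ⬝ᵥ (RicV A B Q t (X t)) *ᵥ v - (-((-κ') * d t)) * (v ⬝ᵥ v) :=
        quadform_sub_smul_one _ _ _
      rw [hM'q, hquad, hv, mul_one]
      set w : Fin n → ℝ := (B t)ᵀ *ᵥ v with hwdef
      have hw1 : 0 ≤ w ⬝ᵥ M t *ᵥ w := hMnn w
      have hw2 : w ⬝ᵥ M t *ᵥ w = w ⬝ᵥ X t *ᵥ w - d t * (w ⬝ᵥ w) := quadform_sub_smul_one _ _ _
      have hww0 : 0 ≤ w ⬝ᵥ w := Finset.sum_nonneg fun k _ => mul_self_nonneg _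
      have hdp := hd_pos t
      have hd1 : d t ≤ 1 := hd_le_one t ht.2.le
      have hXw : 0 ≤ w ⬝ᵥ X t *ᵥ w := by
        rw [hw2] at hw1
        nlinarith
      have hA := abs_le.mp (haf t htIcc v hv)
      have hQ1 : 0 ≤ v ⬝ᵥ Q t *ᵥ v := hqf0 t htIcc v
      have hQ2 : v ⬝ᵥ Q t *ᵥ v ≤ q := hqf t htIcc v hv
      have p1 : 0 ≤ d t * (a - v ⬝ᵥ A t *ᵥ v) := mul_nonneg hdp.le (by linarith [hA.2])
      have p2 : 0 ≤ d t * (1 - d t) * (v ⬝ᵥ Q t *ᵥ v) :=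
        mul_nonneg (mul_nonneg hdp.le (by linarith)) hQ1
      have p3 : 0 ≤ d t * (q - v ⬝ᵥ Q t *ᵥ v) := mul_nonneg hdp.le (by linarith)
      nlinarith [p1, p2, p3, hXw, hdp]
  intro t ht v hv
  have := key t ht v hv
  rw [quadform_sub_smul_one, hv, mul_one] at this
  simp only [hddef] at this
  linarith


lemma dotProduct_self_pos' {v : Fin n → ℝ} (hv : v ≠ 0) : 0 < v ⬝ᵥ v := by
  rcases (Finset.sum_nonneg fun k _ => mul_self_nonneg (v k)).lt_or_eq with h' | h'
  · exact h'
  · exact absurd (dotProduct_self_eq_zero.mp h'.symm) hv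

lemma quadform_of_unit_lt {P : Mat} {r : ℝ}
    (h : ∀ v : Fin n → ℝ, v ⬝ᵥ v = 1 → r < v ⬝ᵥ P *ᵥ v) :
    ∀ w : Fin n → ℝ, w ≠ 0 → r * (w ⬝ᵥ w) < w ⬝ᵥ P *ᵥ w := by
  intro w hw
  have hww : 0 < w ⬝ᵥ w := dotProduct_self_pos' hw
  set c : ℝ := Real.sqrt (w ⬝ᵥ w) with hc
  have hcpos : 0 < c := Real.sqrt_pos.mpr hww
  have hc2 : c ^ 2 = w ⬝ᵥ w := Real.sq_sqrt hww.le
  have hu : (c⁻¹ • w) ⬝ᵥ (c⁻¹ • w) = 1 := by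
    rw [smul_dotProduct, dotProduct_smul]
    rw [← hc2, smul_eq_mul, smul_eq_mul]; field_simp
  have h1 := h (c⁻¹ • w) hu
  have hq : (c⁻¹ • w) ⬝ᵥ P *ᵥ (c⁻¹ • w) = c⁻¹ ^ 2 * (w ⬝ᵥ P *ᵥ w) := quadform_scale P w c⁻¹
  rw [hq] at h1
  have h2 := mul_lt_mul_of_pos_left h1 (by positivity : (0:ℝ) < c ^ 2)
  have h4 : c ^ 2 * (c⁻¹ ^ 2 * (w ⬝ᵥ P *ᵥ w)) = w ⬝ᵥ P *ᵥ w := by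
    field_simp
  rw [h4] at h2
  rw [← hc2]
  nlinarith [h2]

lemma dp_BBt (B : Mat) (v : Fin n → ℝ) :
    ((Bᵀ *ᵥ v) ⬝ᵥ (Bᵀ *ᵥ v)) = v ⬝ᵥ (B * Bᵀ) *ᵥ v := by
  rw [← Matrix.mulVec_mulVec, Matrix.dotProduct_mulVec v B, ← Matrix.mulVec_transpose]

lemma transpose_eq_of_isHermitian {M : Mat} (h : M.IsHermitian) : Mᵀ = M := by
  rw [← Matrix.conjTranspose_eq_transpose_of_trivial]
  exact h

lemma isHermitian_of_transpose {M : Mat} (h : Mᵀ = M) : M.IsHermitian := by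
  rw [Matrix.IsHermitian, Matrix.conjTranspose_eq_transpose_of_trivial]
  exact h

end RiccatiAux
/-- Deterministic specialization of Lemma 4.2: global solvability of the
definite matrix Riccati equation. `Atil` and `Qtil` play the roles of Ã and Q̃. -/
theorem definite_riccati_global_solvability
    (T : ℝ) (hT : 0 < T) (n : ℕ)
    (Atil B Qtil : ℝ → Matrix (Fin n) (Fin n) ℝ)
    (η : Matrix (Fin n) (Fin n) ℝ)
    (hAtil : ContinuousOn Atil (Icc 0 T)) (hB : ContinuousOn B (Icc 0 T))
    (hQtil : ContinuousOn Qtil (Icc 0 T))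
    (hQtilpsd : ∀ t ∈ Icc 0 T, (Qtil t).PosSemidef)
    (hη : η.PosSemidef) :
    ∃ X : ℝ → Matrix (Fin n) (Fin n) ℝ,
      (X T = η ∧
        (∀ t ∈ Icc 0 T,
          HasDerivWithinAt X
            (Atil t * X t + X t * (Atil t)ᵀ - B t * X t * (B t)ᵀ
              + X t * Qtil t * X t)
            (Icc 0 T) t)) ∧
      (∀ Y : ℝ → Matrix (Fin n) (Fin n) ℝ,
        (Y T = η ∧
          (∀ t ∈ Icc 0 T,
            HasDerivWithinAt Y
              (Atil t * Y t + Y t * (Atil t)ᵀ - B t * Y t * (B t)ᵀ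
                + Y t * Qtil t * Y t)
              (Icc 0 T) t)) →
        EqOn Y X (Icc 0 T)) ∧
      (∀ t ∈ Icc 0 T, (X t).PosSemidef) ∧
      (η.PosDef → ∀ t ∈ Icc 0 T, (X t).PosDef) := by
  rcases Nat.eq_zero_or_pos n with hn0 | hn
  · -- trivial case n = 0
    subst hn0
    haveI : Subsingleton (Matrix (Fin 0) (Fin 0) ℝ) :=
      ⟨fun a b => by funext i; exact i.elim0⟩
    refine ⟨fun _ => η, ⟨rfl, fun t ht => ?_⟩,
      fun Y hY t ht => Subsingleton.elim _ _, fun t ht => hη, fun hpd t ht => hpd⟩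
    have h0 := hasDerivWithinAt_const t (Icc (0:ℝ) T) η
    exact h0.congr_deriv (Subsingleton.elim _ _)
  · -- main case
    have h0T : (0:ℝ) ∈ Icc 0 T := ⟨le_rfl, hT.le⟩
    obtain ⟨CA, hCA⟩ := isCompact_Icc.exists_bound_of_continuousOn hAtil
    obtain ⟨CB, hCBb⟩ := isCompact_Icc.exists_bound_of_continuousOn hB
    obtain ⟨CQ, hCQ⟩ := isCompact_Icc.exists_bound_of_continuousOn hQtil
    have hCA0 : 0 ≤ CA := le_trans (norm_nonneg _) (hCA 0 h0T)
    have hCB0 : 0 ≤ CB := le_trans (norm_nonneg _) (hCBb 0 h0T)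
    have hCQ0 : 0 ≤ CQ := le_trans (norm_nonneg _) (hCQ 0 h0T)
    set a : ℝ := (n:ℝ) * CA with hadef
    set b2 : ℝ := (n:ℝ) ^ 2 * CB ^ 2 with hb2def
    set q : ℝ := (n:ℝ) * CQ with hqdef
    have ha0 : 0 ≤ a := by positivity
    have hb20 : 0 ≤ b2 := by positivity
    have hq0 : 0 ≤ q := by positivity
    set κ : ℝ := 2 * a + b2 + q + 1 with hκdef
    have hκpos : 0 < κ := by rw [hκdef]; linarith
    -- quadratic form bounds
    have haf : ∀ t ∈ Icc (0:ℝ) T, ∀ v : Fin n → ℝ, v ⬝ᵥ v = 1 →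
        |v ⬝ᵥ Atil t *ᵥ v| ≤ a := by
      intro t ht v hv
      have h1 := quadform_abs_le (Atil t) v
      rw [hv, mul_one] at h1
      refine h1.trans ?_
      rw [hadef]
      exact mul_le_mul_of_nonneg_left (hCA t ht) (Nat.cast_nonneg n)
    have hbf : ∀ t ∈ Icc (0:ℝ) T, ∀ v : Fin n → ℝ, v ⬝ᵥ v = 1 →
        ((B t)ᵀ *ᵥ v) ⬝ᵥ ((B t)ᵀ *ᵥ v) ≤ b2 := by
      intro t ht v hv
      have h1 := quadform_abs_le (B t * (B t)ᵀ) v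
      rw [hv, mul_one] at h1
      have h2 : ‖B t * (B t)ᵀ‖ ≤ (n:ℝ) * CB ^ 2 := by
        refine (norm_matmul_le _ _).trans ?_
        have hBT : ‖(B t)ᵀ‖ ≤ CB := (norm_transpose' _).trans (hCBb t ht)
        have hn0 : (0:ℝ) ≤ n := Nat.cast_nonneg n
        have h3 := hCBb t ht
        have h4 : ‖B t‖ * ‖(B t)ᵀ‖ ≤ CB * CB :=
          mul_le_mul h3 hBT (norm_nonneg _) hCB0
        have h5 := mul_le_mul_of_nonneg_left h4 hn0
        nlinarith [h5]
      calc ((B t)ᵀ *ᵥ v) ⬝ᵥ ((B t)ᵀ *ᵥ v) = v ⬝ᵥ (B t * (B t)ᵀ) *ᵥ v := dp_BBt _ _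
        _ ≤ |v ⬝ᵥ (B t * (B t)ᵀ) *ᵥ v| := le_abs_self _
        _ ≤ (n:ℝ) * ‖B t * (B t)ᵀ‖ := h1
        _ ≤ (n:ℝ) * ((n:ℝ) * CB ^ 2) := by
            exact mul_le_mul_of_nonneg_left h2 (Nat.cast_nonneg n)
        _ = b2 := by rw [hb2def]; ring
    have hqf0 : ∀ t ∈ Icc (0:ℝ) T, ∀ v : Fin n → ℝ, 0 ≤ v ⬝ᵥ Qtil t *ᵥ v := by
      intro t ht v
      have := (hQtilpsd t ht).dotProduct_mulVec_nonneg v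
      simpa using this
    have hqf : ∀ t ∈ Icc (0:ℝ) T, ∀ v : Fin n → ℝ, v ⬝ᵥ v = 1 →
        v ⬝ᵥ Qtil t *ᵥ v ≤ q := by
      intro t ht v hv
      have h1 := quadform_abs_le (Qtil t) v
      rw [hv, mul_one] at h1
      refine (le_abs_self _).trans (h1.trans ?_)
      rw [hqdef]
      exact mul_le_mul_of_nonneg_left (hCQ t ht) (Nat.cast_nonneg n)
    have hQsym : ∀ t ∈ Icc (0:ℝ) T, (Qtil t)ᵀ = Qtil t := fun t ht =>
      transpose_eq_of_isHermitian (hQtilpsd t ht).1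
    have hηsym : ηᵀ = η := transpose_eq_of_isHermitian hη.1
    have hηq : ∀ v : Fin n → ℝ, 0 ≤ v ⬝ᵥ η *ᵥ v := fun v => by simpa using hη.dotProduct_mulVec_nonneg v
    set U : ℝ := (n:ℝ) * ‖η‖ + 1 with hUdef
    have hU0 : 0 < U := by positivity
    have hηU : ∀ v : Fin n → ℝ, v ⬝ᵥ v = 1 → v ⬝ᵥ η *ᵥ v < U := by
      intro v hv
      have h1 := quadform_abs_le η v
      rw [hv, mul_one] at h1
      have h2 := le_abs_self (v ⬝ᵥ η *ᵥ v)
      rw [hUdef]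
      linarith
    set ε₀ : ℝ := Real.exp (-(κ * T)) with hε₀def
    have hε₀pos : 0 < ε₀ := Real.exp_pos _
    set R₁ : ℝ := max 1 (U * Real.exp (κ * T)) with hR₁def
    have hR₁1 : (1:ℝ) ≤ R₁ := le_max_left _ _
    have hR₁0 : 0 ≤ R₁ := zero_le_one.trans hR₁1
    have hR₁U : U * Real.exp (κ * T) ≤ R₁ := le_max_right _ _
    -- properties of any solution on [τ, T]
    have props : ∀ τ ∈ Icc (0:ℝ) T, ∀ X : ℝ → Matrix (Fin n) (Fin n) ℝ, X T = η →
        (∀ t ∈ Icc τ T, HasDerivWithinAt X (RicV Atil B Qtil t (X t)) (Icc τ T) t) →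
        (∀ t ∈ Icc τ T, (X t)ᵀ = X t) ∧ (∀ t ∈ Icc τ T, ‖X t‖ ≤ R₁) := by
      intro τ hτ X hXT hX
      have hsub : Icc τ T ⊆ Icc (0:ℝ) T := Icc_subset_Icc hτ.1 le_rfl
      have hsym := ric_symm hτ.2 hτ.1 (fun t ht => hCA t (hsub ht))
        (fun t ht => hCBb t (hsub ht)) (fun t ht => hCQ t (hsub ht))
        (fun t ht => hQsym t (hsub ht)) hηsym hXT hX
      refine ⟨hsym, ?_⟩
      have hlow := ric_lower hn hτ.1 hτ.2 ha0 hb20 hq0 hκdef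
        (fun t ht => haf t (hsub ht)) (fun t ht => hbf t (hsub ht))
        (fun t ht => hqf0 t (hsub ht)) (fun t ht => hqf t (hsub ht))
        hηq hXT hX hsym hε₀pos le_rfl
      have hupp := ric_upper hn hτ.1 hτ.2 ha0 hb20 hq0 hU0 hκdef
        (fun t ht => haf t (hsub ht)) (fun t ht => hbf t (hsub ht))
        (fun t ht => hqf0 t (hsub ht)) hηU hXT hX hsym
      intro t ht
      have ht0 : 0 ≤ t := le_trans hτ.1 ht.1
      refine norm_le_of_quadform (X t) (hsym t ht) R₁ hR₁0 ?_
      intro v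
      rcases eq_or_ne v 0 with rfl | hv
      · simp
      · have hvv : 0 < v ⬝ᵥ v := dotProduct_self_pos' hv
        have hexp_le : ε₀ * Real.exp (κ * (T - t)) ≤ 1 := by
          rw [hε₀def, ← Real.exp_add, Real.exp_le_one_iff]
          nlinarith [hκpos.le]
        have hL : ∀ u : Fin n → ℝ, u ⬝ᵥ u = 1 → -(1:ℝ) ≤ u ⬝ᵥ X t *ᵥ u := by
          intro u hu
          have := hlow t ht u hu
          linarith
        have hlow' := quadform_of_unit hL v hv
        have hupp' : v ⬝ᵥ X t *ᵥ v ≤ (U * Real.exp (κ * T)) * (v ⬝ᵥ v) := by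
          have hPle : ∀ u : Fin n → ℝ, u ⬝ᵥ u = 1 →
              (0:ℝ) ≤ u ⬝ᵥ ((U * Real.exp (κ * T)) • (1 : Matrix (Fin n) (Fin n) ℝ)
                - X t) *ᵥ u := by
            intro u hu
            rw [quadform_smul_one_sub, hu, mul_one]
            have h1 := hupp t ht u hu
            have hmono : U * Real.exp (κ * (T - t)) ≤ U * Real.exp (κ * T) := by
              refine mul_le_mul_of_nonneg_left ?_ hU0.le
              refine Real.exp_le_exp.mpr ?_
              nlinarith [hκpos.le]
            linarith
          have h2 := quadform_of_unit hPle v hv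
          rw [quadform_smul_one_sub, zero_mul] at h2
          linarith
        rw [abs_le]
        constructor
        · nlinarith [hlow', hvv, hR₁1]
        · nlinarith [hupp', hvv, hR₁U, hR₁1, Real.exp_pos (κ * T), hU0]
    -- existence
    obtain ⟨X, hXT, hXode⟩ := ric_exists hT.le η hR₁0 hAtil hB hQtil
      (fun τ hτ X hXT hX => (props τ hτ X hXT hX).2)
    have hprops := props 0 h0T X hXT hXode
    have hsymX := hprops.1
    refine ⟨X, ⟨hXT, hXode⟩, ?_, ?_, ?_⟩
    · -- uniqueness
      intro Y hY
      exact ric_unique hT.le le_rfl hCA hCBb hCQ hY.2 hXode (hY.1.trans hXT.symm)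
    · -- positive semidefiniteness
      intro t ht
      refine Matrix.PosSemidef.of_dotProduct_mulVec_nonneg (isHermitian_of_transpose (hsymX t ht)) ?_
      intro x
      have hsx : star x = x := by
        funext i
        simp
      rw [hsx]
      rcases eq_or_ne x 0 with rfl | hx0
      · simp
      · by_contra hneg
        push_neg at hneg
        have hS : 0 < x ⬝ᵥ x := dotProduct_self_pos' hx0
        have hE : 0 < Real.exp (κ * T) := Real.exp_pos _
        set G : ℝ := x ⬝ᵥ X t *ᵥ x with hGdef
        have hGneg : G < 0 := hneg
        set ε : ℝ := min ε₀ (-G / (2 * Real.exp (κ * T) * (x ⬝ᵥ x))) with hεdef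
        have hεpos : 0 < ε := by
          refine lt_min hε₀pos (div_pos (by linarith) (by positivity))
        have hεle : ε ≤ ε₀ := min_le_left _ _
        have hlow := ric_lower hn h0T.1 hT.le ha0 hb20 hq0 hκdef
          haf hbf hqf0 hqf hηq hXT hXode hsymX hεpos hεle
        have hscaled := quadform_of_unit
          (fun u hu => (hlow t ht u hu).le) x hx0
        have hexp_le : Real.exp (κ * (T - t)) ≤ Real.exp (κ * T) := by
          refine Real.exp_le_exp.mpr ?_
          nlinarith [hκpos.le, ht.1]
        have hε2 : ε ≤ -G / (2 * Real.exp (κ * T) * (x ⬝ᵥ x)) := min_le_right _ _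
        have key : -(ε * Real.exp (κ * (T - t))) * (x ⬝ᵥ x) ≤ G := hscaled
        have h3 : ε * Real.exp (κ * (T - t)) * (x ⬝ᵥ x)
            ≤ ε * Real.exp (κ * T) * (x ⬝ᵥ x) := by
          gcongr
        have h4 : ε * Real.exp (κ * T) * (x ⬝ᵥ x) ≤ -G / 2 := by
          rw [le_div_iff₀ (by positivity : (0:ℝ) < 2 * Real.exp (κ * T) * (x ⬝ᵥ x))] at hε2
          nlinarith
        nlinarith
    · -- positive definiteness
      intro hpd t ht
      have hSne : {v : Fin n → ℝ | v ⬝ᵥ v = 1}.Nonempty := by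
        refine ⟨Pi.single ⟨0, hn⟩ 1, ?_⟩
        simp [dotProduct, Pi.single_apply, Finset.sum_ite_eq']
      obtain ⟨v₀, hv₀S, hmin⟩ := isCompact_dpSphere.exists_isMinOn hSne
        (continuous_quadform_v η).continuousOn
      have hv₀ne : v₀ ≠ 0 := by
        intro h
        rw [h] at hv₀S
        simp [dotProduct] at hv₀S
      have hm0 : 0 < v₀ ⬝ᵥ η *ᵥ v₀ := by
        have := hpd.dotProduct_mulVec_pos hv₀ne
        simpa using this
      set m : ℝ := v₀ ⬝ᵥ η *ᵥ v₀ with hmdef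
      set δ : ℝ := min 1 (m / 2) with hδdef
      have hδ0 : 0 < δ := lt_min zero_lt_one (by positivity)
      have hδ1 : δ ≤ 1 := min_le_left _ _
      have hδm : δ < m := by
        rcases min_cases (1:ℝ) (m / 2) with ⟨h1, h2⟩ | ⟨h1, h2⟩ <;> rw [hδdef, h1] <;> linarith
      have hηδ : ∀ v : Fin n → ℝ, v ⬝ᵥ v = 1 → δ < v ⬝ᵥ η *ᵥ v := by
        intro v hv
        exact lt_of_lt_of_le hδm (hmin hv)
      set κ' : ℝ := 2 * a + q + 1 with hκ'def
      have hpdb := ric_posdef hn h0T.1 hT.le ha0 hq0 hδ0 hδ1 hκ'def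
        haf hqf0 hqf hηδ hXT hXode hsymX
      refine Matrix.PosDef.of_dotProduct_mulVec_pos (isHermitian_of_transpose (hsymX t ht)) ?_
      intro x hx0
      have hsx : star x = x := by funext i; simp
      rw [hsx]
      have := quadform_of_unit_lt (fun u hu => hpdb t ht u hu) x hx0
      have hdpos : 0 < δ * Real.exp ((-κ') * (T - t)) * (x ⬝ᵥ x) := by
        have := dotProduct_self_pos' hx0
        positivity
      linarith
end

section
/- Deterministic specialization of Lemma 4.1: the solutions of the two coupled Riccati-type equations are mutually inverse. Let T > 0 and let Ã, B, Q̃ : [0,T] → M_n(ℝ) be continuous. Suppose X, K : [0,T] → M_n(ℝ) are continuously differentiable, satisfy X'(t) = Ã(t)X(t) + X(t)Ã(t)' − B(t)X(t)B(t)' + X(t)Q̃(t)X(t) and K'(t) = −[K(t)Ã(t) + Ã(t)'K(t) + Q̃(t)] + K(t)B(t)X(t)B(t)'K(t) for all t ∈ [0,T], and satisfy K(T)X(T) = I. Then K(t)X(t) = X(t)K(t) = I for all t ∈ [0,T]. -/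
open Matrix Set

attribute [local instance] Matrix.normedAddCommGroup Matrix.normedSpace

lemma my_norm_mul_le {n : ℕ} (A C : Matrix (Fin n) (Fin n) ℝ) :
    ‖A * C‖ ≤ (n + 1) * ‖A‖ * ‖C‖ := by
  have h0 : (0:ℝ) ≤ (n + 1) * ‖A‖ * ‖C‖ := by positivity
  rw [Matrix.norm_le_iff h0]
  intro i j
  calc ‖(A * C) i j‖ = ‖∑ k, A i k * C k j‖ := by rw [Matrix.mul_apply]
    _ ≤ ∑ k, ‖A i k * C k j‖ := norm_sum_le _ _
    _ ≤ ∑ _k : Fin n, ‖A‖ * ‖C‖ := by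
        refine Finset.sum_le_sum fun k _ => ?_
        rw [norm_mul]
        exact mul_le_mul (Matrix.norm_entry_le_entrywise_sup_norm A)
          (Matrix.norm_entry_le_entrywise_sup_norm C) (norm_nonneg _) (norm_nonneg _)
    _ = n * (‖A‖ * ‖C‖) := by simp [mul_comm]
    _ ≤ (n + 1) * ‖A‖ * ‖C‖ := by nlinarith [norm_nonneg A, norm_nonneg C]

lemma my_isBoundedBilinearMap_mul (n : ℕ) :
    IsBoundedBilinearMap ℝ (fun p : Matrix (Fin n) (Fin n) ℝ × Matrix (Fin n) (Fin n) ℝ =>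
      p.1 * p.2) where
  add_left := fun x₁ x₂ y => add_mul x₁ x₂ y
  smul_left := fun c x y => by simp [Matrix.smul_mul]
  add_right := fun x y₁ y₂ => mul_add x y₁ y₂
  smul_right := fun c x y => by simp [Matrix.mul_smul]
  bound := ⟨n + 1, by positivity, fun x y => my_norm_mul_le x y⟩

lemma my_hasDerivWithinAt_mul {n : ℕ} {f g : ℝ → Matrix (Fin n) (Fin n) ℝ}
    {f' g' : Matrix (Fin n) (Fin n) ℝ} {s : Set ℝ} {t : ℝ}
    (hf : HasDerivWithinAt f f' s t) (hg : HasDerivWithinAt g g' s t) :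
    HasDerivWithinAt (fun u => f u * g u) (f t * g' + f' * g t) s t := by
  have h := ((my_isBoundedBilinearMap_mul n).hasFDerivAt (f t, g t)).comp_hasDerivWithinAt t
    (hf.prodMk hg)
  simp only [IsBoundedBilinearMap.deriv_apply] at h
  exact h

/-- Deterministic specialization of Lemma 4.1: the solutions of the two coupled
Riccati-type equations are mutually inverse. `Atil` and `Qtil` play the roles
of Ã and Q̃. -/
theorem coupled_riccati_solutions_mutually_inverse
    (T : ℝ) (hT : 0 < T) (n : ℕ)
    (Atil B Qtil X K : ℝ → Matrix (Fin n) (Fin n) ℝ)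
    (hAtil : ContinuousOn Atil (Icc 0 T)) (hB : ContinuousOn B (Icc 0 T))
    (hQtil : ContinuousOn Qtil (Icc 0 T))
    (hXderiv : ∀ t ∈ Icc 0 T,
      HasDerivWithinAt X
        (Atil t * X t + X t * (Atil t)ᵀ - B t * X t * (B t)ᵀ
          + X t * Qtil t * X t)
        (Icc 0 T) t)
    (hKderiv : ∀ t ∈ Icc 0 T,
      HasDerivWithinAt K
        (-(K t * Atil t + (Atil t)ᵀ * K t + Qtil t)
          + K t * B t * X t * (B t)ᵀ * K t)
        (Icc 0 T) t)
    (hKXT : K T * X T = 1) :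
    ∀ t ∈ Icc 0 T, K t * X t = 1 ∧ X t * K t = 1 := by
  have hXc : ContinuousOn X (Icc 0 T) := fun t ht => (hXderiv t ht).continuousWithinAt
  have hKc : ContinuousOn K (Icc 0 T) := fun t ht => (hKderiv t ht).continuousWithinAt
  set Z : ℝ → Matrix (Fin n) (Fin n) ℝ := fun t => K t * X t - 1 with hZdef
  set L : ℝ → Matrix (Fin n) (Fin n) ℝ :=
    fun t => K t * B t * X t * (B t)ᵀ - (Atil t)ᵀ with hLdef
  set Mm : ℝ → Matrix (Fin n) (Fin n) ℝ := fun t => (Atil t)ᵀ + Qtil t * X t with hMdef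
  have hAT : ContinuousOn (fun t => (Atil t)ᵀ) (Icc 0 T) :=
    (continuous_id.matrix_transpose).comp_continuousOn hAtil
  have hBT : ContinuousOn (fun t => (B t)ᵀ) (Icc 0 T) :=
    (continuous_id.matrix_transpose).comp_continuousOn hB
  have hLc : ContinuousOn L (Icc 0 T) := ((hKc.mul hB).mul hXc |>.mul hBT).sub hAT
  have hMc : ContinuousOn Mm (Icc 0 T) := hAT.add (hQtil.mul hXc)
  -- derivative of Z
  have hZderiv : ∀ t ∈ Icc 0 T,
      HasDerivWithinAt Z (L t * Z t + Z t * Mm t) (Icc 0 T) t := by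
    intro t ht
    have h1 := (my_hasDerivWithinAt_mul (hKderiv t ht) (hXderiv t ht)).sub_const 1
    refine h1.congr_deriv ?_
    simp only [hZdef, hLdef, hMdef]
    noncomm_ring
  -- uniform bound on L and M
  obtain ⟨C1, hC1⟩ := (isCompact_Icc.image_of_continuousOn hLc).isBounded.exists_norm_le
  obtain ⟨C2, hC2⟩ := (isCompact_Icc.image_of_continuousOn hMc).isBounded.exists_norm_le
  set C : ℝ := max C1 C2 ⊔ 0 with hCdef
  have hC0 : (0:ℝ) ≤ C := le_max_right _ _
  have hLb : ∀ t ∈ Icc 0 T, ‖L t‖ ≤ C := fun t ht =>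
    (hC1 _ (mem_image_of_mem _ ht)).trans ((le_max_left C1 C2).trans (le_max_left _ _))
  have hMb : ∀ t ∈ Icc 0 T, ‖Mm t‖ ≤ C := fun t ht =>
    (hC2 _ (mem_image_of_mem _ ht)).trans ((le_max_right C1 C2).trans (le_max_left _ _))
  -- the vector field, with time clamped into [0, T]
  set proj : ℝ → ℝ := fun t => max 0 (min t T) with hprojdef
  have hprojmem : ∀ t, proj t ∈ Icc 0 T :=
    fun t => ⟨le_max_left _ _, max_le hT.le (min_le_right _ _)⟩
  have hprojid : ∀ t ∈ Icc 0 T, proj t = t := by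
    intro t ht
    simp only [hprojdef]
    rw [min_eq_left ht.2, max_eq_right ht.1]
  set v : ℝ → Matrix (Fin n) (Fin n) ℝ → Matrix (Fin n) (Fin n) ℝ :=
    fun t W => L (proj t) * W + W * Mm (proj t) with hvdef
  -- Lipschitz constant
  set Cnn : NNReal := Real.toNNReal (2 * (n + 1) * C) with hCnndef
  have hlip : ∀ t, LipschitzOnWith Cnn (v t)
      ((fun _ => (univ : Set (Matrix (Fin n) (Fin n) ℝ))) t) := by
    intro t
    apply LipschitzOnWith.of_dist_le_mul
    intro x _ y _
    have hvsub : v t x - v t y = L (proj t) * (x - y) + (x - y) * Mm (proj t) := by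
      simp only [hvdef]; noncomm_ring
    rw [dist_eq_norm, dist_eq_norm, hvsub]
    have h1 : ‖L (proj t) * (x - y)‖ ≤ (n + 1) * C * ‖x - y‖ := by
      refine (my_norm_mul_le _ _).trans ?_
      gcongr
      exact hLb _ (hprojmem t)
    have h2 : ‖(x - y) * Mm (proj t)‖ ≤ (n + 1) * C * ‖x - y‖ := by
      refine (my_norm_mul_le _ _).trans ?_
      rw [mul_right_comm]
      gcongr
      exact hMb _ (hprojmem t)
    have hcoe : (Cnn : ℝ) = 2 * (n + 1) * C := by
      rw [hCnndef, Real.coe_toNNReal]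
      positivity
    calc ‖L (proj t) * (x - y) + (x - y) * Mm (proj t)‖
        ≤ ‖L (proj t) * (x - y)‖ + ‖(x - y) * Mm (proj t)‖ := norm_add_le _ _
      _ ≤ 2 * (n + 1) * C * ‖x - y‖ := by linarith
      _ = (Cnn : ℝ) * ‖x - y‖ := by rw [hcoe]
  -- uniqueness of the ODE solution backwards from T
  have key : EqOn Z (fun _ => (0 : Matrix (Fin n) (Fin n) ℝ)) (Icc 0 T) := by
    refine ODE_solution_unique_of_mem_Icc_left (fun t _ => hlip t)
      ((hKc.mul hXc).sub continuousOn_const) ?_ (fun _ _ => mem_univ _)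
      continuousOn_const ?_ (fun _ _ => mem_univ _) ?_
    · intro t ht
      have ht' : t ∈ Icc 0 T := ⟨ht.1.le, ht.2⟩
      have h := hZderiv t ht'
      have hmem : Icc 0 T ∈ nhdsWithin t (Iic t) := by
        rw [mem_nhdsWithin]
        exact ⟨Ioi 0, isOpen_Ioi, ht.1, fun x hx => ⟨hx.1.le, hx.2.trans ht.2⟩⟩
      have h2 := h.mono_of_mem_nhdsWithin hmem
      simpa [hvdef, hprojid t ht'] using h2
    · intro t ht
      have : v t 0 = 0 := by simp [hvdef]
      rw [this]
      exact hasDerivWithinAt_const _ _ _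
    · simp [hZdef, hKXT]
  intro t ht
  have hZ0 : K t * X t = 1 := by
    have := key ht
    simpa [hZdef, sub_eq_zero] using this
  exact ⟨hZ0, mul_eq_one_comm.mp hZ0⟩
end

section
/- Deterministic specialization of Lemma 3.2: exponential lower bound for the linear matrix equation. Let T > 0, δ > 0, and let Â, Q̂, Ĉ₁, …, Ĉ_k, Ê₁, …, Ê_m : [0,T] → M_n(ℝ) be continuous, with Q̂(t) symmetric positive semidefinite for all t. Let Ĥ ∈ M_n(ℝ) be symmetric with Ĥ ≥ δI. Let Y : [0,T] → M_n(ℝ) be continuously differentiable with Y(T) = Ĥ and Y'(t) = −[Y(t)Â(t) + Â(t)'Y(t) + Σ_{i=1}^m Êᵢ(t)'Y(t)Êᵢ(t) + Σ_{j=1}^k Ĉⱼ(t)'Y(t)Ĉⱼ(t) + Q̂(t)] for all t ∈ [0,T]. Define β := max{0, sup over s ∈ [0,T] and unit vectors v ∈ ℝⁿ of −2v'Â(s)v}. Then Y(t) ≥ δe^{−β(T−t)}I for all t ∈ [0,T]. -/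
open Matrix Set Topology Filter

attribute [local instance] Matrix.normedAddCommGroup Matrix.normedSpace

namespace LMEAux

/-- quadratic form as a continuous linear map in the matrix argument -/
noncomputable def qfCLM (n : ℕ) (v : Fin n → ℝ) : Matrix (Fin n) (Fin n) ℝ →L[ℝ] ℝ :=
  LinearMap.toContinuousLinearMap
  { toFun := fun M => v ⬝ᵥ (M *ᵥ v)
    map_add' := fun M N => by simp [Matrix.add_mulVec, dotProduct_add]
    map_smul' := fun c M => by simp [Matrix.smul_mulVec, dotProduct_smul] }

lemma qfCLM_apply {n : ℕ} (v : Fin n → ℝ) (M : Matrix (Fin n) (Fin n) ℝ) :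
    qfCLM n v M = v ⬝ᵥ (M *ᵥ v) := rfl

/-- transpose as a continuous linear map -/
noncomputable def trCLM (n : ℕ) : Matrix (Fin n) (Fin n) ℝ →L[ℝ] Matrix (Fin n) (Fin n) ℝ :=
  LinearMap.toContinuousLinearMap (Matrix.transposeLinearEquiv (Fin n) (Fin n) ℝ ℝ).toLinearMap

lemma trCLM_apply {n : ℕ} (M : Matrix (Fin n) (Fin n) ℝ) : trCLM n M = Mᵀ := rfl

lemma norm_mul_le' {n : ℕ} (A B : Matrix (Fin n) (Fin n) ℝ) : ‖A * B‖ ≤ n * ‖A‖ * ‖B‖ := by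
  have h0 : (0:ℝ) ≤ n * ‖A‖ * ‖B‖ := by positivity
  rw [Matrix.norm_le_iff h0]
  intro i j
  rw [Matrix.mul_apply]
  calc ‖∑ l, A i l * B l j‖ ≤ ∑ l, ‖A i l * B l j‖ := norm_sum_le _ _
    _ ≤ ∑ _l : Fin n, ‖A‖ * ‖B‖ := Finset.sum_le_sum fun l _ => by
        rw [norm_mul]
        exact mul_le_mul (Matrix.norm_entry_le_entrywise_sup_norm A)
          (Matrix.norm_entry_le_entrywise_sup_norm B) (norm_nonneg _) (norm_nonneg _)
    _ = n * ‖A‖ * ‖B‖ := by simp [Finset.sum_const, mul_assoc]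

lemma unit_entry_le {n : ℕ} {v : Fin n → ℝ} (hv : v ⬝ᵥ v = 1) (i : Fin n) : |v i| ≤ 1 := by
  have h1 : v i * v i ≤ 1 := hv ▸ Finset.single_le_sum (f := fun j => v j * v j)
    (fun j _ => mul_self_nonneg _) (Finset.mem_univ i)
  nlinarith [abs_nonneg (v i), sq_abs (v i)]

lemma quad_abs {n : ℕ} (M : Matrix (Fin n) (Fin n) ℝ) {v : Fin n → ℝ} (hv : v ⬝ᵥ v = 1) :
    |v ⬝ᵥ (M *ᵥ v)| ≤ (n:ℝ)^2 * ‖M‖ := by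
  have hvi := unit_entry_le hv
  have hMv : ∀ i, |(M *ᵥ v) i| ≤ (n:ℝ) * ‖M‖ := by
    intro i
    show |∑ j, M i j * v j| ≤ (n:ℝ) * ‖M‖
    have step : ∀ j ∈ Finset.univ, |M i j * v j| ≤ ‖M‖ := by
      intro j _
      rw [abs_mul]
      have := mul_le_mul (Matrix.norm_entry_le_entrywise_sup_norm M (i := i) (j := j)) (hvi j)
        (abs_nonneg _) (norm_nonneg _)
      simpa using this
    calc |∑ j, M i j * v j| ≤ ∑ j, |M i j * v j| := Finset.abs_sum_le_sum_abs _ _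
      _ ≤ ∑ _j : Fin n, ‖M‖ := Finset.sum_le_sum step
      _ = (n:ℝ) * ‖M‖ := by simp [Finset.sum_const]
  have step2 : ∀ i ∈ Finset.univ, |v i * (M *ᵥ v) i| ≤ (n:ℝ) * ‖M‖ := by
    intro i _
    rw [abs_mul]
    have := mul_le_mul (hvi i) (hMv i) (abs_nonneg _) zero_le_one
    simpa using this
  calc |v ⬝ᵥ (M *ᵥ v)| ≤ ∑ i, |v i * (M *ᵥ v) i| := Finset.abs_sum_le_sum_abs _ _
    _ ≤ ∑ _i : Fin n, (n:ℝ) * ‖M‖ := Finset.sum_le_sum step2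
    _ = (n:ℝ)^2 * ‖M‖ := by simp [Finset.sum_const]; ring

lemma posSemidef_of_unit {n : ℕ} {M : Matrix (Fin n) (Fin n) ℝ} (hsymm : Mᵀ = M)
    (h : ∀ v : Fin n → ℝ, v ⬝ᵥ v = 1 → 0 ≤ v ⬝ᵥ (M *ᵥ v)) : M.PosSemidef := by
  refine Matrix.posSemidef_iff_dotProduct_mulVec.mpr ⟨?_, ?_⟩
  · rw [Matrix.IsHermitian, Matrix.conjTranspose_eq_transpose_of_trivial, hsymm]
  intro x
  rcases eq_or_ne x 0 with rfl | hx
  · simp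
  · have hxx0 : (0:ℝ) ≤ x ⬝ᵥ x := Finset.sum_nonneg fun i _ => mul_self_nonneg _
    have hxx : 0 < x ⬝ᵥ x :=
      lt_of_le_of_ne hxx0 (fun he => hx (dotProduct_self_eq_zero.mp he.symm))
    set c := Real.sqrt (x ⬝ᵥ x) with hc
    have hcpos : 0 < c := Real.sqrt_pos.2 hxx
    have hc2 : c * c = x ⬝ᵥ x := Real.mul_self_sqrt hxx0
    have hunit : (c⁻¹ • x) ⬝ᵥ (c⁻¹ • x) = 1 := by
      rw [smul_dotProduct, dotProduct_smul, smul_eq_mul, smul_eq_mul, ← hc2]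
      field_simp
    have h2 := h _ hunit
    rw [Matrix.mulVec_smul, smul_dotProduct, dotProduct_smul] at h2
    simp only [smul_eq_mul] at h2
    have hstar : star x = x := by funext i; simp
    rw [hstar]
    have hcin : 0 < c⁻¹ := inv_pos.2 hcpos
    nlinarith [h2, mul_pos hcin hcin]

lemma sphere_compact (n : ℕ) : IsCompact {v : Fin n → ℝ | v ⬝ᵥ v = 1} := by
  apply Metric.isCompact_of_isClosed_isBounded
  · exact isClosed_eq (by continuity) continuous_const
  · rw [Metric.isBounded_iff_subset_closedBall 0]
    refine ⟨1, fun v hv => ?_⟩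
    simp only [Metric.mem_closedBall, dist_zero_right]
    rw [pi_norm_le_iff_of_nonneg zero_le_one]
    intro i
    rw [Real.norm_eq_abs]
    exact unit_entry_le hv i

lemma deriv_nonneg_of_right_pos {f : ℝ → ℝ} {d a b : ℝ} (hab : a < b)
    (h : HasDerivWithinAt f d (Ioc a b) a) (h0 : f a = 0)
    (hpos : ∀ t ∈ Ioc a b, 0 ≤ f t) : 0 ≤ d := by
  rw [hasDerivWithinAt_iff_tendsto_slope] at h
  have heq : Ioc a b \ {a} = Ioc a b :=
    Set.ext fun t => ⟨fun ht => ht.1, fun ht => ⟨ht, fun he => absurd (he ▸ ht.1) (lt_irrefl _)⟩⟩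
  rw [heq] at h
  have hne : (𝓝[Ioc a b] a).NeBot := by
    rw [nhdsWithin_Ioc_eq_nhdsGT hab]; infer_instance
  refine ge_of_tendsto h ?_
  filter_upwards [self_mem_nhdsWithin] with t ht
  have h1 : 0 < t - a := sub_pos.2 ht.1
  rw [slope_def_field, div_eq_mul_inv, h0, sub_zero]
  exact mul_nonneg (hpos t ht) (le_of_lt (inv_pos.2 h1))

end LMEAux

open LMEAux

set_option maxHeartbeats 1000000 in
/-- Deterministic specialization of Lemma 3.2: exponential lower bound for the
linear matrix equation. `Ahat`, `Qhat`, `Chat j`, `Ehat i`, `Hhat` play the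
roles of Â, Q̂, Ĉⱼ, Êᵢ, Ĥ, and
`β = max {0, sup_{s ∈ [0,T], |v| = 1} -2 v'Â(s)v}`. -/
theorem linear_matrix_equation_exponential_lower_bound
    (T : ℝ) (hT : 0 < T) (δ : ℝ) (hδ : 0 < δ) (n k m : ℕ)
    (Ahat Qhat : ℝ → Matrix (Fin n) (Fin n) ℝ)
    (Chat : Fin k → ℝ → Matrix (Fin n) (Fin n) ℝ)
    (Ehat : Fin m → ℝ → Matrix (Fin n) (Fin n) ℝ)
    (hAhat : ContinuousOn Ahat (Icc 0 T)) (hQhat : ContinuousOn Qhat (Icc 0 T))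
    (hChat : ∀ j, ContinuousOn (Chat j) (Icc 0 T))
    (hEhat : ∀ i, ContinuousOn (Ehat i) (Icc 0 T))
    (hQhatpsd : ∀ t ∈ Icc 0 T, (Qhat t).PosSemidef)
    (Hhat : Matrix (Fin n) (Fin n) ℝ) (hHhatsymm : Hhatᵀ = Hhat)
    (hHhatδ : (Hhat - δ • (1 : Matrix (Fin n) (Fin n) ℝ)).PosSemidef)
    (Y : ℝ → Matrix (Fin n) (Fin n) ℝ)
    (hYT : Y T = Hhat)
    (hYderiv : ∀ t ∈ Icc 0 T,
      HasDerivWithinAt Y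
        (-(Y t * Ahat t + (Ahat t)ᵀ * Y t
            + (∑ i : Fin m, (Ehat i t)ᵀ * Y t * Ehat i t)
            + (∑ j : Fin k, (Chat j t)ᵀ * Y t * Chat j t)
            + Qhat t))
        (Icc 0 T) t)
    (β : ℝ)
    (hβ : β = max 0 (sSup {x : ℝ | ∃ s ∈ Icc 0 T, ∃ v : Fin n → ℝ,
      v ⬝ᵥ v = 1 ∧ x = -(2 * (v ⬝ᵥ (Ahat s *ᵥ v)))})) :
    ∀ t ∈ Icc 0 T,
      (Y t - (δ * Real.exp (-β * (T - t))) • (1 : Matrix (Fin n) (Fin n) ℝ)).PosSemidef := by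
  have hT0 : (0:ℝ) ∈ Icc 0 T := ⟨le_refl 0, le_of_lt hT⟩
  have hTT : T ∈ Icc 0 T := ⟨le_of_lt hT, le_refl T⟩
  have hYcont : ContinuousOn Y (Icc 0 T) := fun s hs => (hYderiv s hs).continuousWithinAt
  -- a uniform bound on the coefficients
  obtain ⟨L, hLA, hLE, hLC, hL0⟩ : ∃ L : ℝ, (∀ s ∈ Icc 0 T, ‖Ahat s‖ ≤ L) ∧
      (∀ i, ∀ s ∈ Icc 0 T, ‖Ehat i s‖ ≤ L) ∧ (∀ j, ∀ s ∈ Icc 0 T, ‖Chat j s‖ ≤ L) ∧ 0 ≤ L := by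
    set ρ : ℝ → ℝ := fun s => ‖Ahat s‖ + ((∑ i, ‖Ehat i s‖) + ∑ j, ‖Chat j s‖) with hρdef
    have hρc : ContinuousOn ρ (Icc 0 T) :=
      (hAhat.norm.add ((continuousOn_finset_sum _ fun i _ => (hEhat i).norm).add
        (continuousOn_finset_sum _ fun j _ => (hChat j).norm)))
    obtain ⟨L, hL⟩ := isCompact_Icc.exists_bound_of_continuousOn hρc
    have hρnn : ∀ s, 0 ≤ ρ s := fun s => by
      have h1 : (0:ℝ) ≤ ∑ i, ‖Ehat i s‖ := Finset.sum_nonneg fun i _ => norm_nonneg _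
      have h2 : (0:ℝ) ≤ ∑ j, ‖Chat j s‖ := Finset.sum_nonneg fun j _ => norm_nonneg _
      have := norm_nonneg (Ahat s); positivity
    have hρL : ∀ s ∈ Icc 0 T, ρ s ≤ L := fun s hs => le_trans (le_abs_self _) (hL s hs)
    refine ⟨L, ?_, ?_, ?_, le_trans (hρnn 0) (hρL 0 hT0)⟩
    · intro s hs
      have h1 : (0:ℝ) ≤ ∑ i, ‖Ehat i s‖ := Finset.sum_nonneg fun i _ => norm_nonneg _
      have h2 : (0:ℝ) ≤ ∑ j, ‖Chat j s‖ := Finset.sum_nonneg fun j _ => norm_nonneg _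
      have := hρL s hs
      simp only [hρdef] at this
      linarith
    · intro i s hs
      have h1 : ‖Ehat i s‖ ≤ ∑ i', ‖Ehat i' s‖ :=
        Finset.single_le_sum (f := fun i' => ‖Ehat i' s‖) (fun _ _ => norm_nonneg _)
          (Finset.mem_univ i)
      have h2 : (0:ℝ) ≤ ∑ j, ‖Chat j s‖ := Finset.sum_nonneg fun j _ => norm_nonneg _
      have h3 := norm_nonneg (Ahat s)
      have := hρL s hs
      simp only [hρdef] at this
      linarith
    · intro j s hs
      have h1 : ‖Chat j s‖ ≤ ∑ j', ‖Chat j' s‖ :=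
        Finset.single_le_sum (f := fun j' => ‖Chat j' s‖) (fun _ _ => norm_nonneg _)
          (Finset.mem_univ j)
      have h2 : (0:ℝ) ≤ ∑ i, ‖Ehat i s‖ := Finset.sum_nonneg fun i _ => norm_nonneg _
      have h3 := norm_nonneg (Ahat s)
      have := hρL s hs
      simp only [hρdef] at this
      linarith
  -- symmetry of Y on [0, T]
  have hsymm : ∀ s ∈ Icc 0 T, (Y s)ᵀ = Y s := by
    set D : ℝ → Matrix (Fin n) (Fin n) ℝ := fun s => (Y s)ᵀ - Y s with hDdef
    set F : ℝ → Matrix (Fin n) (Fin n) ℝ := fun s =>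
      -((Ahat s)ᵀ * D s + D s * Ahat s
          + (∑ i : Fin m, (Ehat i s)ᵀ * D s * Ehat i s)
          + (∑ j : Fin k, (Chat j s)ᵀ * D s * Chat j s)) with hFdef
    have hDcont : ContinuousOn D (Icc 0 T) :=
      ((trCLM n).continuous.comp_continuousOn hYcont).sub hYcont
    have hDderiv : ∀ s ∈ Icc 0 T, HasDerivWithinAt D (F s) (Icc 0 T) s := by
      intro s hs
      have h1 := ((trCLM n).hasFDerivAt.comp_hasDerivWithinAt s (hYderiv s hs)).sub (hYderiv s hs)
      refine h1.congr_deriv (Eq.symm ?_)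
      have hQ : (Qhat s)ᵀ = Qhat s := by
        have := (hQhatpsd s hs).1
        rwa [Matrix.IsHermitian, Matrix.conjTranspose_eq_transpose_of_trivial] at this
      show F s = (-(Y s * Ahat s + (Ahat s)ᵀ * Y s
            + (∑ i : Fin m, (Ehat i s)ᵀ * Y s * Ehat i s)
            + (∑ j : Fin k, (Chat j s)ᵀ * Y s * Chat j s)
            + Qhat s))ᵀ - (-(Y s * Ahat s + (Ahat s)ᵀ * Y s
            + (∑ i : Fin m, (Ehat i s)ᵀ * Y s * Ehat i s)
            + (∑ j : Fin k, (Chat j s)ᵀ * Y s * Chat j s)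
            + Qhat s))
      simp only [hFdef, hDdef, Matrix.transpose_neg, Matrix.transpose_add, Matrix.transpose_mul,
        Matrix.transpose_transpose, Matrix.transpose_sum, hQ, Matrix.mul_sub, Matrix.sub_mul,
        Finset.sum_sub_distrib, mul_assoc]
      abel
    -- Gronwall: backward uniqueness
    set K1 : ℝ := 2*n*L + (m+k)*(n:ℝ)^2*L^2 with hK1def
    have hK10 : 0 ≤ K1 := by positivity
    have hmaps : MapsTo (fun x : ℝ => T - x) (Icc 0 T) (Icc 0 T) := fun x hx =>
      ⟨by simp [hx.2], by simp [hx.1]⟩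
    have hFbound : ∀ s ∈ Icc 0 T, ‖F s‖ ≤ K1 * ‖D s‖ := by
      intro s hs
      have hA := hLA s hs
      have hDs := norm_nonneg (D s)
      have h1 : ‖(Ahat s)ᵀ * D s‖ ≤ n * L * ‖D s‖ := by
        calc ‖(Ahat s)ᵀ * D s‖ ≤ n * ‖(Ahat s)ᵀ‖ * ‖D s‖ := norm_mul_le' _ _
          _ = n * ‖Ahat s‖ * ‖D s‖ := by rw [Matrix.norm_transpose]
          _ ≤ n * L * ‖D s‖ := by
              have : (n:ℝ) * ‖Ahat s‖ ≤ n * L := by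
                apply mul_le_mul_of_nonneg_left hA (by positivity)
              exact mul_le_mul_of_nonneg_right this hDs
      have h2 : ‖D s * Ahat s‖ ≤ n * L * ‖D s‖ := by
        calc ‖D s * Ahat s‖ ≤ n * ‖D s‖ * ‖Ahat s‖ := norm_mul_le' _ _
          _ ≤ n * ‖D s‖ * L := mul_le_mul_of_nonneg_left hA (by positivity)
          _ = n * L * ‖D s‖ := by ring
      have hsand : ∀ (B : Matrix (Fin n) (Fin n) ℝ), ‖B‖ ≤ L →
          ‖Bᵀ * D s * B‖ ≤ (n:ℝ)^2 * L^2 * ‖D s‖ := by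
        intro B hB
        have hB0 : 0 ≤ ‖B‖ := norm_nonneg _
        calc ‖Bᵀ * D s * B‖ ≤ n * ‖Bᵀ * D s‖ * ‖B‖ := norm_mul_le' _ _
          _ ≤ n * (n * ‖Bᵀ‖ * ‖D s‖) * ‖B‖ := by
              refine mul_le_mul_of_nonneg_right (mul_le_mul_of_nonneg_left ?_ (by positivity)) hB0
              exact norm_mul_le' _ _
          _ = (n:ℝ)^2 * ‖D s‖ * (‖B‖ * ‖B‖) := by rw [Matrix.norm_transpose]; ring
          _ ≤ (n:ℝ)^2 * ‖D s‖ * (L * L) := by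
              refine mul_le_mul_of_nonneg_left ?_ (by positivity)
              exact mul_le_mul hB hB hB0 hL0
          _ = (n:ℝ)^2 * L^2 * ‖D s‖ := by ring
      have h3 : ‖∑ i : Fin m, (Ehat i s)ᵀ * D s * Ehat i s‖ ≤ m * ((n:ℝ)^2 * L^2 * ‖D s‖) := by
        calc ‖∑ i : Fin m, (Ehat i s)ᵀ * D s * Ehat i s‖
            ≤ ∑ i : Fin m, ‖(Ehat i s)ᵀ * D s * Ehat i s‖ := norm_sum_le _ _
          _ ≤ ∑ _i : Fin m, (n:ℝ)^2 * L^2 * ‖D s‖ :=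
              Finset.sum_le_sum fun i _ => hsand _ (hLE i s hs)
          _ = m * ((n:ℝ)^2 * L^2 * ‖D s‖) := by simp [Finset.sum_const]
      have h4 : ‖∑ j : Fin k, (Chat j s)ᵀ * D s * Chat j s‖ ≤ k * ((n:ℝ)^2 * L^2 * ‖D s‖) := by
        calc ‖∑ j : Fin k, (Chat j s)ᵀ * D s * Chat j s‖
            ≤ ∑ j : Fin k, ‖(Chat j s)ᵀ * D s * Chat j s‖ := norm_sum_le _ _
          _ ≤ ∑ _j : Fin k, (n:ℝ)^2 * L^2 * ‖D s‖ :=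
              Finset.sum_le_sum fun j _ => hsand _ (hLC j s hs)
          _ = k * ((n:ℝ)^2 * L^2 * ‖D s‖) := by simp [Finset.sum_const]
      calc ‖F s‖ = ‖(Ahat s)ᵀ * D s + D s * Ahat s
            + (∑ i : Fin m, (Ehat i s)ᵀ * D s * Ehat i s)
            + (∑ j : Fin k, (Chat j s)ᵀ * D s * Chat j s)‖ := by rw [hFdef]; exact norm_neg _
        _ ≤ ‖(Ahat s)ᵀ * D s + D s * Ahat s
            + (∑ i : Fin m, (Ehat i s)ᵀ * D s * Ehat i s)‖
            + ‖∑ j : Fin k, (Chat j s)ᵀ * D s * Chat j s‖ := norm_add_le _ _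
        _ ≤ (‖(Ahat s)ᵀ * D s + D s * Ahat s‖
            + ‖∑ i : Fin m, (Ehat i s)ᵀ * D s * Ehat i s‖)
            + ‖∑ j : Fin k, (Chat j s)ᵀ * D s * Chat j s‖ := by
              exact add_le_add_left (norm_add_le _ _) _
        _ ≤ ((‖(Ahat s)ᵀ * D s‖ + ‖D s * Ahat s‖)
            + ‖∑ i : Fin m, (Ehat i s)ᵀ * D s * Ehat i s‖)
            + ‖∑ j : Fin k, (Chat j s)ᵀ * D s * Chat j s‖ := by
              exact add_le_add_left (add_le_add_left (norm_add_le _ _) _) _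
        _ ≤ ((n * L * ‖D s‖ + n * L * ‖D s‖) + m * ((n:ℝ)^2 * L^2 * ‖D s‖))
            + k * ((n:ℝ)^2 * L^2 * ‖D s‖) :=
              add_le_add (add_le_add (add_le_add h1 h2) h3) h4
        _ = K1 * ‖D s‖ := by rw [hK1def]; ring
    have hG : ∀ x ∈ Icc 0 T, ‖D (T - x)‖ ≤ gronwallBound 0 K1 0 (x - 0) := by
      apply norm_le_gronwallBound_of_norm_deriv_right_le
        (f' := fun x => -(F (T - x)))
      · exact hDcont.comp (Continuous.continuousOn (by continuity)) hmaps
      · intro x hx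
        have hTx : T - x ∈ Icc 0 T := hmaps ⟨hx.1, le_of_lt hx.2⟩
        have hin : HasDerivWithinAt (fun s : ℝ => T - s) (-1) (Icc 0 T) x := by
          simpa using (hasDerivWithinAt_id x (Icc 0 T)).const_sub T
        have hcomp := HasDerivWithinAt.scomp x (hDderiv (T - x) hTx) hin hmaps
        have hcomp2 : HasDerivWithinAt (fun s => D (T - s)) (-(F (T - x))) (Icc 0 T) x := by
          simp only [neg_one_smul] at hcomp
          exact hcomp
        exact hcomp2.mono_of_mem_nhdsWithin (Icc_mem_nhdsGE_of_mem ⟨hx.1, hx.2⟩)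
      · simp [hDdef, hYT, hHhatsymm]
      · intro x hx
        have hTx : T - x ∈ Icc 0 T := hmaps ⟨hx.1, le_of_lt hx.2⟩
        rw [norm_neg]
        simpa using hFbound (T - x) hTx
    intro s hs
    have hs' : T - s ∈ Icc 0 T := hmaps hs
    have := hG (T - s) hs'
    rw [gronwallBound_ε0] at this
    simp only [sub_sub_cancel] at this
    have hD0 : D s = 0 := by
      have h0 : ‖D s‖ ≤ 0 := by simpa using this
      simpa using le_antisymm h0 (norm_nonneg _)
    have := sub_eq_zero.mp (hDdef ▸ hD0)
    exact this
  -- beta facts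
  have hβ0 : 0 ≤ β := by rw [hβ]; exact le_max_left _ _
  have hβle : ∀ s ∈ Icc 0 T, ∀ v : Fin n → ℝ, v ⬝ᵥ v = 1 →
      -(2 * (v ⬝ᵥ (Ahat s *ᵥ v))) ≤ β := by
    intro s hs v hv
    rw [hβ]
    refine le_max_of_le_right (le_csSup ⟨2 * (n:ℝ)^2 * L, ?_⟩ ⟨s, hs, v, hv, rfl⟩)
    rintro x ⟨s', hs', v', hv', rfl⟩
    have h := quad_abs (Ahat s') hv'
    have hA := hLA s' hs'
    have habs : |v' ⬝ᵥ (Ahat s' *ᵥ v')| ≤ (n:ℝ)^2 * L := by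
      refine le_trans h ?_
      exact mul_le_mul_of_nonneg_left hA (by positivity)
    have := abs_le.mp habs
    linarith [this.1]
  -- exponential comparison setup
  set q : ℝ → ℝ := fun s => δ * Real.exp (-β * (T - s)) with hqdef
  set g : ℝ → ℝ := fun s => Real.exp (T - s) with hgdef
  set ε₀ : ℝ := δ * Real.exp (-(β+1) * T) with hε₀def
  have hε₀pos : 0 < ε₀ := by positivity
  have hqpos : ∀ s, 0 < q s := fun s => by positivity
  have hgpos : ∀ s, 0 < g s := fun s => Real.exp_pos _
  have hcpos : ∀ ε, 0 < ε → ε < ε₀ → ∀ s ∈ Icc 0 T, 0 < q s - ε * g s := by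
    intro ε hε hεε₀ s hs
    have h1 : ε * g s < ε₀ * g s := by
      exact mul_lt_mul_of_pos_right hεε₀ (hgpos s)
    have h2 : ε₀ * g s ≤ δ * Real.exp (-β * T) := by
      rw [hε₀def, hgdef]
      have : Real.exp (-(β+1) * T) * Real.exp (T - s) = Real.exp (-β * T - s) := by
        rw [← Real.exp_add]; ring_nf
      rw [mul_assoc, this]
      refine mul_le_mul_of_nonneg_left ?_ (le_of_lt hδ)
      exact Real.exp_le_exp.mpr (by linarith [hs.1])
    have h3 : δ * Real.exp (-β * T) ≤ q s := by
      rw [hqdef]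
      refine mul_le_mul_of_nonneg_left ?_ (le_of_lt hδ)
      refine Real.exp_le_exp.mpr ?_
      have h4 : β * (T - s) ≤ β * T := by
        refine mul_le_mul_of_nonneg_left (by linarith [hs.1]) hβ0
      linarith
    linarith
  -- main comparison claim
  have key : ∀ ε, 0 < ε → ε < ε₀ → ∀ s ∈ Icc 0 T, ∀ v : Fin n → ℝ, v ⬝ᵥ v = 1 →
      0 < v ⬝ᵥ (Y s *ᵥ v) - (q s - ε * g s) := by
    intro ε hε hεε₀
    by_contra hcon
    push_neg at hcon
    obtain ⟨t₀, ht₀, v₀, hv₀, hle₀⟩ := hcon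
    set c : ℝ → ℝ := fun s => q s - ε * g s with hcdef
    set clamp : ℝ → ℝ := fun x => max 0 (min x T) with hclampdef
    have hclampc : Continuous clamp := continuous_const.max (continuous_id.min continuous_const)
    have hclampmem : ∀ x, clamp x ∈ Icc 0 T := fun x =>
      ⟨le_max_left _ _, max_le (le_of_lt hT) (min_le_right _ _)⟩
    have hclampid : ∀ x ∈ Icc 0 T, clamp x = x := by
      intro x hx
      rw [hclampdef]
      simp only [min_eq_left hx.2, max_eq_right hx.1]
    set Φ : ℝ × (Fin n → ℝ) → ℝ :=
      fun p => p.2 ⬝ᵥ (Y (clamp p.1) *ᵥ p.2) - c (clamp p.1) with hΦdef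
    have hYc : Continuous fun x : ℝ => Y (clamp x) :=
      hYcont.comp_continuous hclampc hclampmem
    have hccont : Continuous c := by
      rw [hcdef, hqdef, hgdef]
      fun_prop
    have hΦc : Continuous Φ := by
      refine Continuous.sub ?_ (hccont.comp (hclampc.comp continuous_fst))
      exact (continuous_snd).dotProduct
        ((hYc.comp continuous_fst).matrix_mulVec continuous_snd)
    set S := {v : Fin n → ℝ | v ⬝ᵥ v = 1} with hSdef
    set C := ((Icc t₀ T ×ˢ S) ∩ {p | Φ p ≤ 0}) with hCdef
    have hCcomp : IsCompact C := ((isCompact_Icc).prod (sphere_compact n)).inter_right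
      (isClosed_le hΦc continuous_const)
    set B := Prod.fst '' C with hBdef
    have hBcomp : IsCompact B := hCcomp.image continuous_fst
    have ht₀0 : 0 ≤ t₀ := ht₀.1
    have hBsub : ∀ x ∈ B, x ∈ Icc t₀ T ∧ ∃ u : Fin n → ℝ, u ⬝ᵥ u = 1 ∧
        u ⬝ᵥ (Y x *ᵥ u) - c x ≤ 0 := by
      rintro x ⟨p, ⟨⟨hp1, hp2⟩, hp3⟩, rfl⟩
      have hx : p.1 ∈ Icc 0 T := ⟨le_trans ht₀0 hp1.1, hp1.2⟩
      refine ⟨hp1, p.2, hp2, ?_⟩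
      have hΦp : Φ p = p.2 ⬝ᵥ (Y (clamp p.1) *ᵥ p.2) - c (clamp p.1) := rfl
      have h5 : Φ p ≤ 0 := hp3
      rwa [hΦp, hclampid p.1 hx] at h5
    have hmem : ∀ x ∈ Icc t₀ T, ∀ u : Fin n → ℝ, u ⬝ᵥ u = 1 →
        u ⬝ᵥ (Y x *ᵥ u) - c x ≤ 0 → x ∈ B := by
      intro x hx u hu hle
      have hx' : x ∈ Icc 0 T := ⟨le_trans ht₀0 hx.1, hx.2⟩
      refine ⟨(x, u), ⟨⟨hx, hu⟩, ?_⟩, rfl⟩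
      show Φ (x, u) ≤ 0
      rw [hΦdef]
      simp only [hclampid x hx']
      exact hle
    have hBne : B.Nonempty := ⟨t₀, hmem t₀ ⟨le_refl _, ht₀.2⟩ v₀ hv₀ (by
      have hct₀ : c t₀ = q t₀ - ε * g t₀ := by rw [hcdef]
      rw [hct₀]; linarith)⟩
    set t₁ := sSup B with ht₁def
    have ht₁B : t₁ ∈ B := hBcomp.isClosed.csSup_mem hBne hBcomp.bddAbove
    obtain ⟨ht₁mem, v, hvunit, hvle⟩ := hBsub t₁ ht₁B
    have ht₁Icc : t₁ ∈ Icc 0 T := ⟨le_trans ht₀0 ht₁mem.1, ht₁mem.2⟩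
    have hstarv : star v = v := funext fun i => by simp
    -- t₁ < T
    have ht₁T : t₁ < T := by
      rcases lt_or_eq_of_le ht₁mem.2 with h | h
      · exact h
      · exfalso
        rw [h] at hvle
        have hcT : c T = δ - ε := by rw [hcdef, hqdef, hgdef]; simp
        rw [hYT, hcT] at hvle
        have hpsd := hHhatδ.dotProduct_mulVec_nonneg v
        rw [hstarv, Matrix.sub_mulVec, dotProduct_sub, Matrix.smul_mulVec,
          Matrix.one_mulVec, dotProduct_smul, smul_eq_mul, hvunit, mul_one] at hpsd
        linarith
    -- after t₁, all quadratic forms positive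
    have hafter : ∀ x ∈ Ioc t₁ T, ∀ u : Fin n → ℝ, u ⬝ᵥ u = 1 →
        0 < u ⬝ᵥ (Y x *ᵥ u) - c x := by
      intro x hx u hu
      by_contra hle
      push_neg at hle
      have hxB : x ∈ B := hmem x ⟨le_trans ht₁mem.1 (le_of_lt hx.1), hx.2⟩ u hu hle
      exact absurd (le_csSup hBcomp.bddAbove hxB) (not_le.2 hx.1)
    -- right-continuity at t₁
    have hnn : ∀ u : Fin n → ℝ, u ⬝ᵥ u = 1 → 0 ≤ u ⬝ᵥ (Y t₁ *ᵥ u) - c t₁ := by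
      intro u hu
      have hφc : Continuous (fun x => Φ (x, u)) := hΦc.comp (continuous_id.prodMk continuous_const)
      have htnd : Tendsto (fun x => Φ (x, u)) (𝓝[Ioc t₁ T] t₁) (𝓝 (Φ (t₁, u))) :=
        (hφc.tendsto t₁).mono_left nhdsWithin_le_nhds
      have hval : Φ (t₁, u) = u ⬝ᵥ (Y t₁ *ᵥ u) - c t₁ := by
        rw [hΦdef]; simp only [hclampid t₁ ht₁Icc]
      have hne : (𝓝[Ioc t₁ T] t₁).NeBot := by
        rw [nhdsWithin_Ioc_eq_nhdsGT ht₁T]; infer_instance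
      rw [← hval]
      refine ge_of_tendsto htnd ?_
      filter_upwards [self_mem_nhdsWithin] with x hx
      have hx' : x ∈ Icc 0 T := ⟨le_trans ht₁Icc.1 (le_of_lt hx.1), hx.2⟩
      have hgt := hafter x hx u hu
      have heq : Φ (x, u) = u ⬝ᵥ (Y x *ᵥ u) - c x := by
        rw [hΦdef]; simp only [hclampid x hx']
      rw [heq]
      linarith
    -- the touching matrix
    set M := Y t₁ - c t₁ • (1 : Matrix (Fin n) (Fin n) ℝ) with hMdef
    have hMqf : ∀ u : Fin n → ℝ, u ⬝ᵥ (M *ᵥ u) = u ⬝ᵥ (Y t₁ *ᵥ u) - c t₁ * (u ⬝ᵥ u) := by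
      intro u
      rw [hMdef, Matrix.sub_mulVec, dotProduct_sub, Matrix.smul_mulVec,
        Matrix.one_mulVec, dotProduct_smul, smul_eq_mul]
    have hMsymm : Mᵀ = M := by
      rw [hMdef, Matrix.transpose_sub, Matrix.transpose_smul, Matrix.transpose_one,
        hsymm t₁ ht₁Icc]
    have hMpsd : M.PosSemidef := posSemidef_of_unit hMsymm (fun u hu => by
      rw [hMqf u, hu, mul_one]; exact hnn u hu)
    have hv0 : v ⬝ᵥ (M *ᵥ v) = 0 := by
      have hle' : v ⬝ᵥ (M *ᵥ v) ≤ 0 := by rw [hMqf v, hvunit, mul_one]; exact hvle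
      have hge' : 0 ≤ v ⬝ᵥ (M *ᵥ v) := by rw [hMqf v, hvunit, mul_one]; exact hnn v hvunit
      linarith
    have hker : M *ᵥ v = 0 := by
      have hiff := hMpsd.dotProduct_mulVec_zero_iff v
      rw [hstarv] at hiff
      exact hiff.mp hv0
    have hYv : Y t₁ *ᵥ v = c t₁ • v := by
      have h1 := hker
      rw [hMdef, Matrix.sub_mulVec, Matrix.smul_mulVec, Matrix.one_mulVec,
        sub_eq_zero] at h1
      exact h1
    -- derivative of the quadratic form at t₁
    have hcderiv : HasDerivAt c (β * q t₁ + ε * g t₁) t₁ := by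
      have h1 : HasDerivAt (fun s : ℝ => T - s) (-1) t₁ := by
        simpa using (hasDerivAt_id t₁).const_sub T
      have h2 : HasDerivAt (fun s : ℝ => -β * (T - s)) β t₁ := by
        have := h1.const_mul (-β)
        simpa using this
      have h3 : HasDerivAt (fun s : ℝ => δ * Real.exp (-β * (T - s)))
          (δ * (Real.exp (-β * (T - t₁)) * β)) t₁ := (h2.exp).const_mul δ
      have h4 : HasDerivAt (fun s : ℝ => ε * Real.exp (T - s))
          (ε * (Real.exp (T - t₁) * -1)) t₁ := (h1.exp).const_mul ε
      have h5 := h3.sub h4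
      rw [hcdef, hqdef, hgdef]
      refine h5.congr_deriv ?_
      beta_reduce
      ring
    set Yd := -(Y t₁ * Ahat t₁ + (Ahat t₁)ᵀ * Y t₁
            + (∑ i : Fin m, (Ehat i t₁)ᵀ * Y t₁ * Ehat i t₁)
            + (∑ j : Fin k, (Chat j t₁)ᵀ * Y t₁ * Chat j t₁)
            + Qhat t₁) with hYddef
    set d : ℝ := v ⬝ᵥ (Yd *ᵥ v) - (β * q t₁ + ε * g t₁) with hddef
    have hφderiv : HasDerivWithinAt (fun s => v ⬝ᵥ (Y s *ᵥ v) - c s) d (Icc 0 T) t₁ := by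
      have h1 := (qfCLM n v).hasFDerivAt.comp_hasDerivWithinAt t₁ (hYderiv t₁ ht₁Icc)
      exact h1.sub hcderiv.hasDerivWithinAt
    have hd0 : 0 ≤ d := by
      refine deriv_nonneg_of_right_pos ht₁T (hφderiv.mono ?_) ?_ ?_
      · exact fun x hx => ⟨le_trans ht₁Icc.1 (le_of_lt hx.1), hx.2⟩
      · have h := hv0
        rw [hMqf v, hvunit, mul_one] at h
        linarith
      · intro x hx
        exact le_of_lt (hafter x hx v hvunit)
    -- now show d < 0, a contradiction
    have hc1pos : 0 < c t₁ := hcpos ε hε hεε₀ t₁ ht₁Icc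
    set a : ℝ := v ⬝ᵥ (Ahat t₁ *ᵥ v) with hadef
    have hT1 : v ⬝ᵥ ((Y t₁ * Ahat t₁) *ᵥ v) = c t₁ * a := by
      rw [← Matrix.mulVec_mulVec, Matrix.dotProduct_mulVec, ← Matrix.mulVec_transpose,
        hsymm t₁ ht₁Icc, hYv, smul_dotProduct, smul_eq_mul, hadef]
    have hT2 : v ⬝ᵥ (((Ahat t₁)ᵀ * Y t₁) *ᵥ v) = c t₁ * a := by
      rw [← Matrix.mulVec_mulVec, hYv, Matrix.mulVec_smul, dotProduct_smul, smul_eq_mul,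
        Matrix.dotProduct_mulVec, Matrix.vecMul_transpose, dotProduct_comm, hadef]
    have hsand : ∀ (E : Matrix (Fin n) (Fin n) ℝ),
        0 ≤ v ⬝ᵥ ((Eᵀ * Y t₁ * E) *ᵥ v) := by
      intro E
      have hexp : v ⬝ᵥ ((Eᵀ * Y t₁ * E) *ᵥ v) = (E *ᵥ v) ⬝ᵥ (Y t₁ *ᵥ (E *ᵥ v)) := by
        rw [← Matrix.mulVec_mulVec, ← Matrix.mulVec_mulVec, Matrix.dotProduct_mulVec,
          Matrix.vecMul_transpose]
      rw [hexp]
      set w := E *ᵥ v with hwdef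
      have hpsd := hMpsd.dotProduct_mulVec_nonneg w
      have hstarw : star w = w := funext fun i => by simp
      rw [hstarw] at hpsd
      rw [hMqf w] at hpsd
      have hww : 0 ≤ w ⬝ᵥ w := Finset.sum_nonneg fun i _ => mul_self_nonneg _
      nlinarith
    have hQv : 0 ≤ v ⬝ᵥ (Qhat t₁ *ᵥ v) := by
      have := (hQhatpsd t₁ ht₁Icc).dotProduct_mulVec_nonneg v
      rwa [hstarv] at this
    have hexp : v ⬝ᵥ (Yd *ᵥ v) = -(v ⬝ᵥ ((Y t₁ * Ahat t₁) *ᵥ v)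
        + v ⬝ᵥ (((Ahat t₁)ᵀ * Y t₁) *ᵥ v)
        + (∑ i : Fin m, v ⬝ᵥ (((Ehat i t₁)ᵀ * Y t₁ * Ehat i t₁) *ᵥ v))
        + (∑ j : Fin k, v ⬝ᵥ (((Chat j t₁)ᵀ * Y t₁ * Chat j t₁) *ᵥ v))
        + v ⬝ᵥ (Qhat t₁ *ᵥ v)) := by
      rw [hYddef]
      simp only [← qfCLM_apply, map_neg, map_add, map_sum]
    have hE : 0 ≤ ∑ i : Fin m, v ⬝ᵥ (((Ehat i t₁)ᵀ * Y t₁ * Ehat i t₁) *ᵥ v) :=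
      Finset.sum_nonneg fun i _ => hsand _
    have hC : 0 ≤ ∑ j : Fin k, v ⬝ᵥ (((Chat j t₁)ᵀ * Y t₁ * Chat j t₁) *ᵥ v) :=
      Finset.sum_nonneg fun j _ => hsand _
    have hBa : -(2 * a) ≤ β := by
      have := hβle t₁ ht₁Icc v hvunit
      rw [← hadef] at this
      linarith
    have hdlt : d < 0 := by
      rw [hddef, hexp, hT1, hT2]
      have h2ca : -(2 * a) * c t₁ ≤ β * c t₁ :=
        mul_le_mul_of_nonneg_right hBa (le_of_lt hc1pos)
      have hceq : c t₁ = q t₁ - ε * g t₁ := by rw [hcdef]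
      have hβc : β * c t₁ = β * q t₁ - β * (ε * g t₁) := by rw [hceq]; ring
      have hβεg : 0 ≤ β * (ε * g t₁) :=
        mul_nonneg hβ0 (mul_nonneg (le_of_lt hε) (le_of_lt (hgpos t₁)))
      have hεg : 0 < ε * g t₁ := mul_pos hε (hgpos t₁)
      nlinarith
    linarith
  -- conclusion
  intro t ht
  have hherm : (Y t - (δ * Real.exp (-β * (T - t))) • (1 : Matrix (Fin n) (Fin n) ℝ))ᵀ
      = Y t - (δ * Real.exp (-β * (T - t))) • (1 : Matrix (Fin n) (Fin n) ℝ) := by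
    rw [Matrix.transpose_sub, Matrix.transpose_smul, Matrix.transpose_one, hsymm t ht]
  refine posSemidef_of_unit hherm ?_
  intro v hv
  have hqf : v ⬝ᵥ ((Y t - (δ * Real.exp (-β * (T - t))) • (1 : Matrix (Fin n) (Fin n) ℝ)) *ᵥ v)
      = v ⬝ᵥ (Y t *ᵥ v) - q t := by
    rw [Matrix.sub_mulVec, dotProduct_sub, Matrix.smul_mulVec, Matrix.one_mulVec,
      dotProduct_smul, smul_eq_mul, hv, hqdef, mul_one]
  rw [hqf]
  have htend : Tendsto (fun ε : ℝ => v ⬝ᵥ (Y t *ᵥ v) - q t + ε * g t) (𝓝[>] 0)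
      (𝓝 (v ⬝ᵥ (Y t *ᵥ v) - q t)) := by
    have hc : Tendsto (fun ε : ℝ => v ⬝ᵥ (Y t *ᵥ v) - q t + ε * g t) (𝓝 0)
        (𝓝 (v ⬝ᵥ (Y t *ᵥ v) - q t + 0 * g t)) := by
      exact Tendsto.add tendsto_const_nhds ((continuous_id.mul continuous_const).tendsto 0)
    rw [zero_mul, add_zero] at hc
    exact hc.mono_left nhdsWithin_le_nhds
  refine ge_of_tendsto htend ?_
  filter_upwards [Ioo_mem_nhdsGT_of_mem (Set.left_mem_Ico.mpr hε₀pos)] with ε hε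
  have := key ε hε.1 hε.2 t ht v hv
  linarith
end
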